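/- arXiv:2501.00809 — 4 statements merged into one kernel-verified Lean document; each statement's English description precedes it below -/
import Mathlib

section
/- Fix an integer m ≥ 2 and an integer w with 3(m−1) ≤ w ≤ 6m−9, and set δ_w = 6m−9−w. Let 𝓜^T_w be the set of v = (i,j,k) ∈ ℕ³ with i+2j+3k−3m = w, i+j ≤ 3(m−1), i+j+k ≥ 3m−2, and t_𝓜(v) ≥ τ_w+1. Then: (1) there exists v ∈ 𝓜^T_w with second coordinate j(v) = j if and only if j ∈ ℕ satisfies j + 2η(j−w) ≤ δ_w + 2η(w) − 3; (2) given such a j, there exists v ∈ 𝓜^T_w with j(v) = j and first coordinate i(v) = i if and only if i ∈ ℕ is congruent to j+w modulo 3 and satisfies (δ_w+3−j+3ε(w+j))/2 ≤ i ≤ δ_w+η(w)−j−η(j−w). -/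
open Finset

abbrev V : Type := ℤ × ℤ × ℤ

/-- weight of a monomial `(a,b,c)`, i.e. `a + 2b + 3c` -/
def wtR (u : V) : ℤ := u.1 + 2 * u.2.1 + 3 * u.2.2

/-- the `𝓜`-weight of `(i,j,k)`, i.e. `i + 2j + 3k - 3m` -/
def wtM (m : ℤ) (v : V) : ℤ := v.1 + 2 * v.2.1 + 3 * v.2.2 - 3 * m

/-- `t_𝓡 (a,b,c) = ⌊c/2⌋` -/
def tR (u : V) : ℤ := u.2.2 / 2

/-- `t_𝓜 (i,j,k) = ⌊(3(m-1)-i-j)/3⌋` -/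
def tM (m : ℤ) (v : V) : ℤ := (3 * (m - 1) - v.1 - v.2.1) / 3

/-- the threshold number `τ_w = ⌊w/3⌋ - (m-1)` -/
def tauW (m w : ℤ) : ℤ := w / 3 - (m - 1)

/-- `δ_w = 6m - 9 - w` -/
def deltaW (m w : ℤ) : ℤ := 6 * m - 9 - w

/-- `ε(n)`: residue of `n` mod 2, in `{0,1}` -/
def epsZ (n : ℤ) : ℤ := n % 2

/-- `η(n)`: residue of `n` mod 3, in `{0,1,2}` -/
def etaZ (n : ℤ) : ℤ := n % 3

/-- `ρ(n)`: the representative of `n` mod 6 lying in `{-6,-4,-3,-2,-1,1}` -/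
def rhoZ (n : ℤ) : ℤ := if n % 6 = 1 then 1 else n % 6 - 6

/-- `λ(n) = (n - ρ(n))/6` -/
def lamZ (n : ℤ) : ℤ := (n - rhoZ n) / 6

/-- `q_h = (0, 3h, m - 2h)` -/
def qvec (m h : ℤ) : V := (0, 3 * h, m - 2 * h)

def e1v : V := (1, 1, -1)

def e2v : V := (0, 3, -2)

/-- `u` has non-negative coordinates (i.e. `u ∈ ℕ³`) -/
def nonnegV (u : V) : Prop := 0 ≤ u.1 ∧ 0 ≤ u.2.1 ∧ 0 ≤ u.2.2

/-- `𝓡 = {(a,b,c) ∈ ℕ³ : a + b ≤ 3(m-1)}` -/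
def Rfull (m : ℤ) : Set V := {u | nonnegV u ∧ u.1 + u.2.1 ≤ 3 * (m - 1)}

/-- `𝓜 = {(i,j,k) ∈ ℕ³ : i + j ≤ 3(m-1), i + j + k ≥ 3m - 2}` -/
def Mfull (m : ℤ) : Set V :=
  {v | nonnegV v ∧ v.1 + v.2.1 ≤ 3 * (m - 1) ∧ 3 * m - 2 ≤ v.1 + v.2.1 + v.2.2}

/-- `𝓡' = {(a,b,c) ∈ ℕ³ : 2a + 2b + 3c ≤ 6m - 9}` -/
def Rprime (m : ℤ) : Set V := {u | nonnegV u ∧ 2 * u.1 + 2 * u.2.1 + 3 * u.2.2 ≤ 6 * m - 9}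

/-- `𝓜' = {(i,j,k) ∈ ℕ³ : 2i+2j+3k ≤ 9(m-1), i+j ≤ 3(m-1), i+j+k ≥ 3m-2}` -/
def Mprime (m : ℤ) : Set V :=
  {v | nonnegV v ∧ 2 * v.1 + 2 * v.2.1 + 3 * v.2.2 ≤ 9 * (m - 1) ∧
    v.1 + v.2.1 ≤ 3 * (m - 1) ∧ 3 * m - 2 ≤ v.1 + v.2.1 + v.2.2}

/-- the rectangular region `𝓡^▭` -/
def Rrect (m : ℤ) : Set V := {u ∈ Rprime m | tR u ≤ tauW m (wtR u)}

/-- the rectangular region `𝓜^▭` -/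
def Mrect (m : ℤ) : Set V := {v ∈ Mprime m | tM m v ≤ tauW m (wtM m v)}

/-- the triangular region `𝓡^△ = 𝓡' ∖ 𝓡^▭` -/
def Rtri (m : ℤ) : Set V := {u ∈ Rprime m | tauW m (wtR u) + 1 ≤ tR u}

/-- the triangular region `𝓜^△ = 𝓜' ∖ 𝓜^▭` -/
def Mtri (m : ℤ) : Set V := {v ∈ Mprime m | tauW m (wtM m v) + 1 ≤ tM m v}

/-- the extended triangular region `𝓡^T` -/
def RText (m : ℤ) : Set V := {u | nonnegV u ∧ tauW m (wtR u) + 1 ≤ tR u}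

/-- the extended triangular region `𝓜^T` -/
def MText (m : ℤ) : Set V := {v ∈ Mfull m | tauW m (wtM m v) + 1 ≤ tM m v}

/-- the bijection `φ^▭ (u) = u + q_{λ(u)}` on the rectangular region -/
def phiRect (m : ℤ) (u : V) : V := u + qvec m (lamZ (deltaW m (wtR u) - u.1))

/-- the parametrization `u^△ (w,r,s)` of the extended triangular region `𝓡^T` -/
def uTri (d : V) : V :=
  (3 * d.2.2 + etaZ (d.1 + d.2.1), d.2.1,
    (d.1 - 2 * d.2.1 - 3 * d.2.2 - etaZ (d.1 + d.2.1)) / 3)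

/-- the parametrization `v^△ (w,r,s)` of the extended triangular region `𝓜^T` -/
def vTri (m : ℤ) (d : V) : V :=
  ((6 * (m - 1) - d.1 - 2 * d.2.1 + 3 * d.2.2 - epsZ (d.1 + d.2.2)) / 2,
    2 * d.2.1 + epsZ (d.1 + d.2.2),
    (d.1 - 2 * d.2.1 - d.2.2 + 2 - epsZ (d.1 + d.2.2)) / 2)

/-- `𝓓 = {(w,r,s) ∈ ℕ³ : 2r + 3s ≤ w}` -/
def Dall : Set V := {d | nonnegV d ∧ 2 * d.2.1 + 3 * d.2.2 ≤ d.1}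

/-- `t_𝓓 (w,r,s) = ⌊(w - 2r - 3s)/6⌋` -/
def tD (d : V) : ℤ := (d.1 - 2 * d.2.1 - 3 * d.2.2) / 6

/-- `𝓓^T = {d ∈ 𝓓 : t_𝓓(d) ≥ τ_w + 1}` -/
def DText (m : ℤ) : Set V := {d ∈ Dall | tauW m d.1 + 1 ≤ tD d}

/-- explicit formula for `φ^△ = v^△ ∘ (u^△)⁻¹`: for `u = (a,b,c) ∈ 𝓡^T` the unique
`(w,r,s) ∈ 𝓓^T` with `u^△(w,r,s) = u` is `(wt(u), b, ⌊a/3⌋)`. -/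
def phiTri (m : ℤ) (u : V) : V := vTri m (wtR u, u.2.1, u.1 / 3)

/-- the glued bijection `φ`: `φ^▭` on `𝓡^▭` and `φ^△` on `𝓡^△` -/
def phiW (m : ℤ) (u : V) : V :=
  if tR u ≤ tauW m (wtR u) then phiRect m u else phiTri m u

noncomputable def boxF (N : ℤ) : Finset V := Finset.Icc 0 N ×ˢ (Finset.Icc 0 N ×ˢ Finset.Icc 0 N)

/-- `𝓡_w` as a finset -/
noncomputable def RfullWF (m w : ℤ) : Finset V :=
  (boxF w).filter fun u => u.1 + u.2.1 ≤ 3 * (m - 1) ∧ wtR u = w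

/-- `𝓜_w` as a finset -/
noncomputable def MfullWF (m w : ℤ) : Finset V :=
  (boxF (w + 3 * m)).filter fun v =>
    v.1 + v.2.1 ≤ 3 * (m - 1) ∧ 3 * m - 2 ≤ v.1 + v.2.1 + v.2.2 ∧ wtM m v = w

/-- `𝓡'_w` as a finset -/
noncomputable def RprimeWF (m w : ℤ) : Finset V :=
  (boxF w).filter fun u => 2 * u.1 + 2 * u.2.1 + 3 * u.2.2 ≤ 6 * m - 9 ∧ wtR u = w

/-- `𝓜'_w` as a finset -/
noncomputable def MprimeWF (m w : ℤ) : Finset V :=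
  (boxF (w + 3 * m)).filter fun v =>
    2 * v.1 + 2 * v.2.1 + 3 * v.2.2 ≤ 9 * (m - 1) ∧ v.1 + v.2.1 ≤ 3 * (m - 1) ∧
      3 * m - 2 ≤ v.1 + v.2.1 + v.2.2 ∧ wtM m v = w

/-- `𝓡^▭_w` as a finset -/
noncomputable def RrectWF (m w : ℤ) : Finset V := (RprimeWF m w).filter fun u => tR u ≤ tauW m w

/-- `𝓜^▭_w` as a finset -/
noncomputable def MrectWF (m w : ℤ) : Finset V := (MprimeWF m w).filter fun v => tM m v ≤ tauW m w

/-- `𝓡^△_w` as a finset -/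
noncomputable def RtriWF (m w : ℤ) : Finset V := (RprimeWF m w).filter fun u => tauW m w + 1 ≤ tR u

/-- `𝓜^△_w` as a finset -/
noncomputable def MtriWF (m w : ℤ) : Finset V := (MprimeWF m w).filter fun v => tauW m w + 1 ≤ tM m v

/-- `λ(u) = λ(δ_w - a(u))` -/
def lamU (m w : ℤ) (u : V) : ℤ := lamZ (deltaW m w - u.1)

/-- the order `≺` on `𝓡^▭_w` -/
def precR (m w : ℤ) (u u' : V) : Prop :=
  lamU m w u < lamU m w u' ∨
    (lamU m w u = lamU m w u' ∧ u'.1 < u.1) ∨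
      (lamU m w u = lamU m w u' ∧ u.1 = u'.1 ∧ tR u < tR u')

/-- the order `≺` on `𝓜^▭_w` -/
def precM (m w : ℤ) (v v' : V) : Prop :=
  lamU m w v < lamU m w v' ∨
    (lamU m w v = lamU m w v' ∧ v'.1 < v.1) ∨
      (lamU m w v = lamU m w v' ∧ v.1 = v'.1 ∧ tM m v < tM m v')

/-- the bijection `φ̂_{ℓ₀} : 𝓑 → 𝓒` on the abstract special block;
on `𝓑`, points are `u⁰_ℓ = (0, 3ℓ, -2ℓ)` and `u¹_ℓ = (1, 3ℓ+1, -2ℓ-1)`. -/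
def phiHatB (m n l0 : ℤ) (u : V) : V :=
  if u.1 = 0 then
    if u.2.1 / 3 < l0 then (0, 3 * (n + u.2.1 / 3 + 1), m - 2 * (n + u.2.1 / 3 + 1))
    else if u.2.1 / 3 = l0 then (1, 3 * (n + l0) + 1, m - 2 * (n + l0) - 1)
    else (0, 3 * (n + u.2.1 / 3), m - 2 * (n + u.2.1 / 3))
  else
    if (u.2.1 - 1) / 3 < l0 then
      (1, 3 * (n + (u.2.1 - 1) / 3) + 1, m - 2 * (n + (u.2.1 - 1) / 3) - 1)
    else (1, 3 * (n + (u.2.1 - 1) / 3 + 1) + 1, m - 2 * (n + (u.2.1 - 1) / 3 + 1) - 1)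

/-- the abstract special block `𝓑`: `u⁰_ℓ = ℓ·e₂` for `0 ≤ ℓ ≤ τ+1`,
`u¹_ℓ = e₁ + ℓ·e₂` for `0 ≤ ℓ ≤ τ` -/
def BblockF (t : ℕ) : Finset V :=
  ((Finset.range (t + 2)).image fun l : ℕ => ((0 : ℤ), 3 * (l : ℤ), -2 * (l : ℤ))) ∪
    ((Finset.range (t + 1)).image fun l : ℕ => ((1 : ℤ), 3 * (l : ℤ) + 1, -2 * (l : ℤ) - 1))

/-- the abstract special block `𝓒`: `v⁰_ℓ = (0,0,m) + (n+ℓ)·e₂` for `1 ≤ ℓ ≤ τ+1`,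
`v¹_ℓ = (0,0,m) + e₁ + (n+ℓ)·e₂` for `0 ≤ ℓ ≤ τ+1` -/
def CblockF (m n t : ℕ) : Finset V :=
  ((Finset.Icc 1 (t + 1)).image fun l : ℕ =>
      ((0 : ℤ), 3 * ((n : ℤ) + (l : ℤ)), (m : ℤ) - 2 * ((n : ℤ) + (l : ℤ)))) ∪
    ((Finset.range (t + 2)).image fun l : ℕ =>
      ((1 : ℤ), 3 * ((n : ℤ) + (l : ℤ)) + 1, (m : ℤ) - 2 * ((n : ℤ) + (l : ℤ)) - 1))

/-- `δ_{w,n} = δ_w - 6n` -/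
def deltaWN (m w n : ℤ) : ℤ := deltaW m w - 6 * n

/-- `n_max = ⌊(6m - 9 - w)/6⌋` -/
def nmaxZ (m w : ℤ) : ℤ := (6 * m - 9 - w) / 6

/-- the special block `𝓑_n ⊆ 𝓡'_w` -/
def Bblock (m w n : ℤ) : Set V :=
  {u ∈ Rprime m | wtR u = w ∧ (u.1 = deltaWN m w n ∨ u.1 = deltaWN m w n - 1) ∧
    3 * n - 1 + etaZ w ≤ u.2.1}

/-- the special block `𝓒_n ⊆ 𝓜'_w` -/
def Cblock (m w n : ℤ) : Set V :=
  {v ∈ Mprime m | wtM m v = w ∧ (v.1 = deltaWN m w n ∨ v.1 = deltaWN m w n - 1) ∧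
    6 * n + 2 ≤ v.2.1}

/-- the corner monomial `u⁰_{n,0} = (δ_{w,n}-1, 3n-1+η(w), c_w)` of `𝓑_n` -/
def cornerB (m w n : ℤ) : V := (deltaWN m w n - 1, 3 * n - 1 + etaZ w, 2 * (tauW m w + 1))

/-- `𝓜^T_w`: elements of the extended triangular region of `𝓜`-weight `w` -/
def MTw (m w : ℤ) : Set V := {v ∈ MText m | wtM m v = w}


lemma mem_MTw_iff (m w : ℤ) (v : V) :
    v ∈ MTw m w ↔
      0 ≤ v.1 ∧ 0 ≤ v.2.1 ∧ 0 ≤ v.2.2 ∧ v.1 + v.2.1 ≤ 3 * (m - 1) ∧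
        3 * m - 2 ≤ v.1 + v.2.1 + v.2.2 ∧ tauW m (wtM m v) + 1 ≤ tM m v ∧ wtM m v = w := by
  simp only [MTw, MText, Mfull, nonnegV, Set.mem_setOf_eq]
  tauto

/-- **Lemma `ijtriangle`.** Description of the possible pairs `(i,j)` of first
coordinates of elements of `𝓜^T_w`. -/
theorem ij_triangle (m w : ℤ) (hm : 2 ≤ m) (hw1 : 3 * (m - 1) ≤ w) (hw2 : w ≤ 6 * m - 9) :
    (∀ j : ℤ, 0 ≤ j →
      ((∃ v ∈ MTw m w, v.2.1 = j) ↔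
        j + 2 * etaZ (j - w) ≤ deltaW m w + 2 * etaZ w - 3)) ∧
    ∀ j : ℤ, 0 ≤ j → j + 2 * etaZ (j - w) ≤ deltaW m w + 2 * etaZ w - 3 →
      ∀ i : ℤ,
        ((∃ v ∈ MTw m w, v.2.1 = j ∧ v.1 = i) ↔
          (0 ≤ i ∧ i % 3 = (j + w) % 3 ∧
            (deltaW m w + 3 - j + 3 * epsZ (w + j)) / 2 ≤ i ∧
            i ≤ deltaW m w + etaZ w - j - etaZ (j - w))) := by
  constructor
  · intro j hj
    constructor
    · rintro ⟨v, hv, hjv⟩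
      rw [mem_MTw_iff] at hv
      simp only [tauW, tM, wtM, deltaW, etaZ] at *
      omega
    · intro h
      simp only [tauW, tM, wtM, deltaW, etaZ] at *
      refine ⟨(deltaW m w + etaZ w - j - etaZ (j - w), j,
        (w + 3 * m - (deltaW m w + etaZ w - j - etaZ (j - w)) - 2 * j) / 3), ?_, rfl⟩
      rw [mem_MTw_iff]
      simp only [tauW, tM, wtM, deltaW, etaZ]
      omega
  · intro j hj hcond i
    constructor
    · rintro ⟨v, hv, hjv, hiv⟩
      rw [mem_MTw_iff] at hv
      simp only [tauW, tM, wtM, deltaW, etaZ, epsZ] at *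
      omega
    · rintro ⟨hi0, hmod, hlo, hhi⟩
      refine ⟨(i, j, (w + 3 * m - i - 2 * j) / 3), ?_, rfl, rfl⟩
      rw [mem_MTw_iff]
      simp only [tauW, tM, wtM, deltaW, etaZ, epsZ] at *
      omega
end

section
/- Fix an integer m ≥ 2 and (w,r,s) ∈ 𝓓^T. Write (a,b,c) = u^△(w,r,s), (a',b',c') = v^△(w,r,s) − u^△(w,r,s), and t = t_𝓓((w,r,s)). Then a' = 3(t−τ_w−1) + h(a,c) + 2 − η(w), where h(a,c) = (2+3ε(c)−η(a)−ε(c+η(a)))/2. Moreover h(a,c) ∈ {0,1,2} and depends only on η(a) and ε(c): h = 0 if (η(a),ε(c)) ∈ {(1,0),(2,0)}, h = 1 if (η(a),ε(c)) ∈ {(0,0),(2,1)}, and h = 2 if (η(a),ε(c)) ∈ {(0,1),(1,1)}. -/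
open Finset

/-- **Lemma `aprime`.** Formula for the first coordinate `a'` of the multiplier
`q^△(w,r,s) = v^△(w,r,s) - u^△(w,r,s)` in terms of `t`, `τ_w` and `h(a,c)`. -/
theorem aprime_formula (m : ℤ) (hm : 2 ≤ m) (d : V) (hd : d ∈ DText m)
    (a c h : ℤ) (ha : a = (uTri d).1) (hc : c = (uTri d).2.2)
    (hh : h = (2 + 3 * epsZ c - etaZ a - epsZ (c + etaZ a)) / 2) :
    (vTri m d).1 - (uTri d).1 = 3 * (tD d - tauW m d.1 - 1) + h + 2 - etaZ d.1 ∧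
    (h = 0 ∨ h = 1 ∨ h = 2) ∧
    (etaZ a = 1 ∧ epsZ c = 0 → h = 0) ∧ (etaZ a = 2 ∧ epsZ c = 0 → h = 0) ∧
    (etaZ a = 0 ∧ epsZ c = 0 → h = 1) ∧ (etaZ a = 2 ∧ epsZ c = 1 → h = 1) ∧
    (etaZ a = 0 ∧ epsZ c = 1 → h = 2) ∧ (etaZ a = 1 ∧ epsZ c = 1 → h = 2) := by
  obtain ⟨w, r, s⟩ := d
  obtain ⟨⟨⟨hw, hr, hs⟩, hrs⟩, ht⟩ := hd
  simp only [uTri, vTri, tD, tauW, etaZ, epsZ] at *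
  omega
end

section
/- Fix m, n, τ ∈ ℕ with 2n+2 ≤ m. The bijections φ̂_{ℓ₀} : 𝓑 → 𝓒 for 0 ≤ ℓ₀ ≤ τ+1 all have the same multiset of multipliers, namely q_n+e₁ with multiplicity 1 and q_n and q_{n+1} each with multiplicity τ+1; in particular each φ̂_{ℓ₀} satisfies Divisibility (all multipliers have non-negative entries). Moreover, for any 0 ≤ ℓ₀, ℓ₁ ≤ τ+1, the permutation φ̂_{ℓ₁}⁻¹∘φ̂_{ℓ₀} of 𝓑 is even. -/
open Finset

/-- v⁰ point of 𝓒 -/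
def v0F (m n l : ℤ) : V := (0, 3 * (n + l), m - 2 * (n + l))

/-- v¹ point of 𝓒 -/
def v1F (m n l : ℤ) : V := (1, 3 * (n + l) + 1, m - 2 * (n + l) - 1)

lemma phiHat_u0 (m n l0 l : ℤ) :
    phiHatB m n l0 (0, 3 * l, -2 * l) =
      if l < l0 then v0F m n (l + 1) else if l = l0 then v1F m n l0 else v0F m n l := by
  have h3 : (3 * l) / 3 = l := by omega
  simp only [phiHatB, v0F, v1F]
  norm_num [h3]
  split_ifs <;> simp <;> ring_nf

lemma phiHat_u1 (m n l0 l : ℤ) :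
    phiHatB m n l0 (1, 3 * l + 1, -2 * l - 1) =
      if l < l0 then v1F m n l else v1F m n (l + 1) := by
  have h3 : (3 * l + 1 - 1) / 3 = l := by omega
  simp only [phiHatB, v0F, v1F]
  norm_num [h3]
  split_ifs <;> simp <;> ring_nf

lemma mem_BblockF {t : ℕ} {u : V} :
    u ∈ BblockF t ↔
      (∃ l : ℕ, l ≤ t + 1 ∧ u = (0, 3 * (l : ℤ), -2 * (l : ℤ))) ∨
      (∃ l : ℕ, l ≤ t ∧ u = (1, 3 * (l : ℤ) + 1, -2 * (l : ℤ) - 1)) := by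
  simp only [BblockF, Finset.mem_union, Finset.mem_image, Finset.mem_range]
  constructor
  · rintro (⟨l, hl, rfl⟩ | ⟨l, hl, rfl⟩)
    · exact Or.inl ⟨l, by omega, rfl⟩
    · exact Or.inr ⟨l, by omega, rfl⟩
  · rintro (⟨l, hl, rfl⟩ | ⟨l, hl, rfl⟩)
    · exact Or.inl ⟨l, by omega, rfl⟩
    · exact Or.inr ⟨l, by omega, rfl⟩

lemma v0F_mem (m n t : ℕ) (l : ℤ) (h1 : 1 ≤ l) (h2 : l ≤ (t : ℤ) + 1) :
    v0F m n l ∈ CblockF m n t := by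
  refine Finset.mem_union_left _ ?_
  refine Finset.mem_image.2 ⟨l.toNat, ?_, ?_⟩
  · simp only [Finset.mem_Icc]; omega
  · simp only [v0F]; push_cast [Int.toNat_of_nonneg (by omega : (0:ℤ) ≤ l)]; rfl

lemma v1F_mem (m n t : ℕ) (l : ℤ) (h1 : 0 ≤ l) (h2 : l ≤ (t : ℤ) + 1) :
    v1F m n l ∈ CblockF m n t := by
  refine Finset.mem_union_right _ ?_
  refine Finset.mem_image.2 ⟨l.toNat, ?_, ?_⟩
  · simp only [Finset.mem_range]; omega
  · simp only [v1F]; push_cast [Int.toNat_of_nonneg h1]; rfl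
lemma card_BblockF (t : ℕ) : (BblockF t).card = 2 * t + 3 := by
  rw [BblockF, Finset.card_union_of_disjoint, Finset.card_image_of_injOn,
      Finset.card_image_of_injOn, Finset.card_range, Finset.card_range]
  · omega
  · intro a _ b _ hab
    simp only [Prod.mk.injEq] at hab
    omega
  · intro a _ b _ hab
    simp only [Prod.mk.injEq] at hab
    omega
  · rw [Finset.disjoint_left]
    rintro x hx hx'
    simp only [Finset.mem_image] at hx hx'
    obtain ⟨a, _, rfl⟩ := hx
    obtain ⟨b, _, hb⟩ := hx'
    simp only [Prod.mk.injEq] at hb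
    omega

lemma card_CblockF (m n t : ℕ) : (CblockF m n t).card = 2 * t + 3 := by
  rw [CblockF, Finset.card_union_of_disjoint, Finset.card_image_of_injOn,
      Finset.card_image_of_injOn, Nat.card_Icc, Finset.card_range]
  · omega
  · intro a _ b _ hab
    simp only [Prod.mk.injEq] at hab
    omega
  · intro a _ b _ hab
    simp only [Prod.mk.injEq] at hab
    omega
  · rw [Finset.disjoint_left]
    rintro x hx hx'
    simp only [Finset.mem_image] at hx hx'
    obtain ⟨a, _, rfl⟩ := hx
    obtain ⟨b, _, hb⟩ := hx'
    simp only [Prod.mk.injEq] at hb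
    omega

lemma injOn_phiHat (m n : ℤ) (t : ℕ) (l0 : ℤ) :
    Set.InjOn (phiHatB m n l0) (BblockF t : Set V) := by
  intro u hu u' hu' hEq
  rw [Finset.mem_coe, mem_BblockF] at hu hu'
  rcases hu with ⟨l, hl, rfl⟩ | ⟨l, hl, rfl⟩ <;>
    rcases hu' with ⟨l', hl', rfl⟩ | ⟨l', hl', rfl⟩ <;>
    simp only [phiHat_u0, phiHat_u1] at hEq <;>
    split_ifs at hEq <;>
    simp [v0F, v1F, Prod.ext_iff] at hEq ⊢ <;>
    omega

lemma mapsTo_phiHat (m n t : ℕ) (l0 : ℤ) (h0 : 0 ≤ l0) (h1 : l0 ≤ (t : ℤ) + 1) :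
    ∀ u ∈ BblockF t, phiHatB m n l0 u ∈ CblockF m n t := by
  intro u hu
  rw [mem_BblockF] at hu
  rcases hu with ⟨l, hl, rfl⟩ | ⟨l, hl, rfl⟩
  · rw [phiHat_u0]
    split_ifs
    · exact v0F_mem m n t _ (by omega) (by omega)
    · exact v1F_mem m n t _ (by omega) (by omega)
    · exact v0F_mem m n t _ (by omega) (by omega)
  · rw [phiHat_u1]
    split_ifs
    · exact v1F_mem m n t _ (by omega) (by omega)
    · exact v1F_mem m n t _ (by omega) (by omega)

lemma image_phiHat (m n t : ℕ) (l0 : ℤ) (h0 : 0 ≤ l0) (h1 : l0 ≤ (t : ℤ) + 1) :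
    (BblockF t).image (phiHatB m n l0) = CblockF m n t := by
  apply Finset.eq_of_subset_of_card_le
  · exact Finset.image_subset_iff.2 (mapsTo_phiHat m n t l0 h0 h1)
  · rw [Finset.card_image_of_injOn (injOn_phiHat m n t l0), card_BblockF, card_CblockF]

lemma bijOn_phiHat (m n t : ℕ) (l0 : ℤ) (h0 : 0 ≤ l0) (h1 : l0 ≤ (t : ℤ) + 1) :
    Set.BijOn (phiHatB m n l0) (BblockF t : Set V) (CblockF m n t : Set V) := by
  refine ⟨fun u hu => mapsTo_phiHat m n t l0 h0 h1 u hu, injOn_phiHat m n t l0, ?_⟩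
  intro v hv
  rw [← image_phiHat m n t l0 h0 h1, Finset.coe_image] at hv
  exact hv
lemma map_range_split {α : Type*} (g : ℕ → α) (x y : α) (N k : ℕ) (hk : k ≤ N)
    (h1 : ∀ l, l < k → g l = x) (h2 : ∀ l, k ≤ l → l < N → g l = y) :
    (Multiset.range N).map g = Multiset.replicate k x + Multiset.replicate (N - k) y := by
  have hN : N = k + (N - k) := by omega
  conv_lhs => rw [hN]
  rw [Multiset.range_add, Multiset.map_add, Multiset.map_map]
  congr 1
  · refine Multiset.eq_replicate.2 ⟨by simp, ?_⟩
    intro b hb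
    obtain ⟨l, hl, rfl⟩ := Multiset.mem_map.1 hb
    exact h1 l (by simpa using hl)
  · refine Multiset.eq_replicate.2 ⟨by simp, ?_⟩
    intro b hb
    obtain ⟨l, hl, rfl⟩ := Multiset.mem_map.1 hb
    simp only [Multiset.mem_range] at hl
    exact h2 (k + l) (by omega) (by omega)

lemma map_range_split3 {α : Type*} (g : ℕ → α) (x y z : α) (N k : ℕ) (hk : k < N)
    (h1 : ∀ l, l < k → g l = x) (h2 : g k = y) (h3 : ∀ l, k < l → l < N → g l = z) :
    (Multiset.range N).map g =
      y ::ₘ (Multiset.replicate k x + Multiset.replicate (N - 1 - k) z) := by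
  have hN : N = (k + 1) + (N - (k + 1)) := by omega
  conv_lhs => rw [hN]
  rw [Multiset.range_add, Multiset.map_add, Multiset.map_map]
  have e1 : Multiset.map g (Multiset.range (k + 1)) = y ::ₘ Multiset.replicate k x := by
    rw [Multiset.range_succ, Multiset.map_cons, h2]
    congr 1
    refine Multiset.eq_replicate.2 ⟨by simp, ?_⟩
    intro b hb
    obtain ⟨l, hl, rfl⟩ := Multiset.mem_map.1 hb
    exact h1 l (by simpa using hl)
  have e2 : Multiset.map (g ∘ fun l => k + 1 + l) (Multiset.range (N - (k + 1))) =
      Multiset.replicate (N - 1 - k) z := by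
    refine Multiset.eq_replicate.2 ⟨by simp; omega, ?_⟩
    intro b hb
    obtain ⟨l, hl, rfl⟩ := Multiset.mem_map.1 hb
    simp only [Multiset.mem_range] at hl
    exact h3 (k + 1 + l) (by omega) (by omega)
  rw [e1, e2, Multiset.cons_add]

lemma mult_u0 (m n l0 l : ℤ) :
    phiHatB m n l0 (0, 3 * l, -2 * l) - ((0 : ℤ), 3 * l, -2 * l) =
      if l < l0 then qvec m (n + 1) else if l = l0 then qvec m n + e1v else qvec m n := by
  rw [phiHat_u0]
  split_ifs <;> simp [v0F, v1F, qvec, e1v, Prod.ext_iff] <;> omega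

lemma mult_u1 (m n l0 l : ℤ) :
    phiHatB m n l0 (1, 3 * l + 1, -2 * l - 1) - ((1 : ℤ), 3 * l + 1, -2 * l - 1) =
      if l < l0 then qvec m n else qvec m (n + 1) := by
  rw [phiHat_u1]
  split_ifs <;> simp [v0F, v1F, qvec, e1v, Prod.ext_iff] <;> omega

lemma finset_disjUnion_val {α : Type*} (s t : Finset α) (h : Disjoint s t) :
    (s.disjUnion t h).val = s.val + t.val := rfl

lemma Bblock_val (t : ℕ) : (BblockF t).val =
    (Multiset.range (t + 2)).map (fun l : ℕ => ((0 : ℤ), 3 * (l : ℤ), -2 * (l : ℤ))) +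
      (Multiset.range (t + 1)).map (fun l : ℕ => ((1 : ℤ), 3 * (l : ℤ) + 1, -2 * (l : ℤ) - 1)) := by
  have hdisj : Disjoint
      ((Finset.range (t + 2)).image fun l : ℕ => ((0 : ℤ), 3 * (l : ℤ), -2 * (l : ℤ)))
      ((Finset.range (t + 1)).image fun l : ℕ => ((1 : ℤ), 3 * (l : ℤ) + 1, -2 * (l : ℤ) - 1)) := by
    rw [Finset.disjoint_left]
    rintro x hx hx'
    simp only [Finset.mem_image] at hx hx'
    obtain ⟨a, _, rfl⟩ := hx
    obtain ⟨b, _, hb⟩ := hx'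
    simp only [Prod.mk.injEq] at hb
    omega
  rw [BblockF, ← Finset.disjUnion_eq_union _ _ hdisj,
      finset_disjUnion_val _ _ hdisj, Finset.image_val_of_injOn, Finset.image_val_of_injOn, Finset.range_val, Finset.range_val]
  · intro a _ b _ hab
    simp only [Prod.mk.injEq] at hab
    omega
  · intro a _ b _ hab
    simp only [Prod.mk.injEq] at hab
    omega

lemma mult_multiset (m n : ℤ) (t k0 : ℕ) (hk : k0 ≤ t + 1) :
    (BblockF t).val.map (fun u => phiHatB m n (k0 : ℤ) u - u) =
      (qvec m n + e1v) ::ₘ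
        (Multiset.replicate (t + 1) (qvec m n) +
          Multiset.replicate (t + 1) (qvec m (n + 1))) := by
  rw [Bblock_val, Multiset.map_add, Multiset.map_map, Multiset.map_map]
  rw [map_range_split3 _ (qvec m (n + 1)) (qvec m n + e1v) (qvec m n) (t + 2) k0 (by omega)
      (fun l hl => by simp only [Function.comp_apply]; rw [mult_u0]; rw [if_pos (by exact_mod_cast Int.ofNat_lt.2 hl)])
      (by simp only [Function.comp_apply]; rw [mult_u0]; rw [if_neg (by omega), if_pos rfl])
      (fun l hl1 hl2 => by
        simp only [Function.comp_apply]; rw [mult_u0];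
        rw [if_neg (by exact_mod_cast by omega), if_neg (by exact_mod_cast by omega)])]
  rw [map_range_split _ (qvec m n) (qvec m (n + 1)) (t + 1) k0 hk
      (fun l hl => by simp only [Function.comp_apply]; rw [mult_u1]; rw [if_pos (by exact_mod_cast hl)])
      (fun l hl1 hl2 => by simp only [Function.comp_apply]; rw [mult_u1]; rw [if_neg (by exact_mod_cast by omega)])]
  rw [Multiset.cons_add]
  congr 1
  have key : ∀ (a b : V) (i j : ℕ),
      Multiset.replicate i b + Multiset.replicate j a +
        (Multiset.replicate i a + Multiset.replicate j b) =
      Multiset.replicate (i + j) a + Multiset.replicate (i + j) b := by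
    intro a b i j
    rw [Multiset.replicate_add, Multiset.replicate_add]
    abel
  have h2 : t + 2 - 1 - k0 = t + 1 - k0 := by omega
  rw [h2, key (qvec m n) (qvec m (n + 1)) k0 (t + 1 - k0),
      show k0 + (t + 1 - k0) = t + 1 by omega]
lemma step_perm (m n : ℤ) (t k : ℕ) (hk : k ≤ t) :
    ∃ π : Equiv.Perm {x // x ∈ BblockF t}, Equiv.Perm.sign π = 1 ∧
      ∀ u : {x // x ∈ BblockF t},
        phiHatB m n ((k : ℤ) + 1) (π u : V) = phiHatB m n (k : ℤ) (u : V) := by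
  have ha : ((0 : ℤ), 3 * (k : ℤ), -2 * (k : ℤ)) ∈ BblockF t :=
    mem_BblockF.2 (Or.inl ⟨k, by omega, rfl⟩)
  have hb : ((1 : ℤ), 3 * (k : ℤ) + 1, -2 * (k : ℤ) - 1) ∈ BblockF t :=
    mem_BblockF.2 (Or.inr ⟨k, by omega, rfl⟩)
  have hc : ((0 : ℤ), 3 * ((k : ℤ) + 1), -2 * ((k : ℤ) + 1)) ∈ BblockF t :=
    mem_BblockF.2 (Or.inl ⟨k + 1, by omega, by push_cast; try ring_nf⟩)
  set a : {x // x ∈ BblockF t} := ⟨_, ha⟩ with ha'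
  set b : {x // x ∈ BblockF t} := ⟨_, hb⟩ with hb'
  set c : {x // x ∈ BblockF t} := ⟨_, hc⟩ with hc'
  have hab : a ≠ b := by
    intro hEq; rw [ha', hb', Subtype.mk.injEq] at hEq
    simp [Prod.ext_iff] at hEq
  have hbc : b ≠ c := by
    intro hEq; rw [hb', hc', Subtype.mk.injEq] at hEq
    simp [Prod.ext_iff] at hEq
  have hac : a ≠ c := by
    intro hEq; rw [ha', hc', Subtype.mk.injEq] at hEq
    simp [Prod.ext_iff] at hEq; try omega
  refine ⟨Equiv.swap a b * Equiv.swap b c, ?_, ?_⟩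
  · rw [map_mul, Equiv.Perm.sign_swap hab, Equiv.Perm.sign_swap hbc]; decide
  · intro u
    by_cases h1 : u = a
    · subst h1
      rw [Equiv.Perm.mul_apply, Equiv.swap_apply_of_ne_of_ne hab hac, Equiv.swap_apply_left]
      show phiHatB m n ((k : ℤ) + 1) (1, 3 * (k : ℤ) + 1, -2 * (k : ℤ) - 1) =
        phiHatB m n (k : ℤ) (0, 3 * (k : ℤ), -2 * (k : ℤ))
      rw [phiHat_u1, phiHat_u0]
      split_ifs <;> first | rfl | omega
    by_cases h2 : u = b
    · subst h2
      rw [Equiv.Perm.mul_apply, Equiv.swap_apply_left, Equiv.swap_apply_of_ne_of_ne (Ne.symm hac) (Ne.symm hbc)]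
      show phiHatB m n ((k : ℤ) + 1) (0, 3 * ((k : ℤ) + 1), -2 * ((k : ℤ) + 1)) =
        phiHatB m n (k : ℤ) (1, 3 * (k : ℤ) + 1, -2 * (k : ℤ) - 1)
      rw [phiHat_u0, phiHat_u1]
      split_ifs <;> first | rfl | omega
    by_cases h3 : u = c
    · subst h3
      rw [Equiv.Perm.mul_apply, Equiv.swap_apply_right, Equiv.swap_apply_right]
      show phiHatB m n ((k : ℤ) + 1) (0, 3 * (k : ℤ), -2 * (k : ℤ)) =
        phiHatB m n (k : ℤ) (0, 3 * ((k : ℤ) + 1), -2 * ((k : ℤ) + 1))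
      rw [phiHat_u0, phiHat_u0]
      split_ifs <;> first | rfl | omega
    · rw [Equiv.Perm.mul_apply, Equiv.swap_apply_of_ne_of_ne h2 h3,
        Equiv.swap_apply_of_ne_of_ne h1 h2]
      obtain ⟨uv, hu⟩ := u
      have h1' : uv ≠ ((0 : ℤ), 3 * (k : ℤ), -2 * (k : ℤ)) := fun hh => h1 (Subtype.ext hh)
      have h2' : uv ≠ ((1 : ℤ), 3 * (k : ℤ) + 1, -2 * (k : ℤ) - 1) := fun hh => h2 (Subtype.ext hh)
      have h3' : uv ≠ ((0 : ℤ), 3 * ((k : ℤ) + 1), -2 * ((k : ℤ) + 1)) := fun hh => h3 (Subtype.ext hh)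
      show phiHatB m n ((k : ℤ) + 1) uv = phiHatB m n (k : ℤ) uv
      rcases mem_BblockF.1 hu with ⟨l, hl, rfl⟩ | ⟨l, hl, rfl⟩
      · have e1 : l ≠ k := fun hlk => h1' (by rw [hlk])
        have e2 : l ≠ k + 1 := fun hlk => h3' (by rw [hlk]; push_cast; try ring_nf)
        rw [phiHat_u0, phiHat_u0]
        split_ifs <;> first | rfl | omega
      · have e1 : l ≠ k := fun hlk => h2' (by rw [hlk])
        rw [phiHat_u1, phiHat_u1]
        split_ifs <;> first | rfl | omega

lemma chain_perm (m n : ℤ) (t : ℕ) (k : ℕ) : k ≤ t + 1 →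
    ∃ π : Equiv.Perm {x // x ∈ BblockF t}, Equiv.Perm.sign π = 1 ∧
      ∀ u : {x // x ∈ BblockF t},
        phiHatB m n (k : ℤ) (π u : V) = phiHatB m n 0 (u : V) := by
  induction k with
  | zero => exact fun _ => ⟨1, by simp, fun u => by norm_num⟩
  | succ k ih =>
    intro hk
    obtain ⟨π, hπs, hπ⟩ := ih (by omega)
    obtain ⟨σ, hσs, hσ⟩ := step_perm m n t k (by omega)
    refine ⟨σ * π, by rw [map_mul, hσs, hπs, mul_one], fun u => ?_⟩
    push_cast
    simp only [Equiv.Perm.coe_mul, Function.comp_apply]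
    rw [hσ (π u), hπ u]
/-- **Lemma `specialblockbijectionsnew`.** The bijections `φ̂_{ℓ₀} : 𝓑 → 𝓒`
all have the same multiset of multipliers (namely `q_n + e₁` once and `q_n`, `q_{n+1}` each
`τ+1` times), satisfy Divisibility, and any two of them have the same parity. -/
theorem special_block_bijections (m n t : ℕ) (h : 2 * n + 2 ≤ m) :
    (∀ l0 : ℤ, 0 ≤ l0 → l0 ≤ (t : ℤ) + 1 →
      Set.BijOn (phiHatB m n l0) (BblockF t : Set V) (CblockF m n t : Set V) ∧
      (BblockF t).val.map (fun u => phiHatB m n l0 u - u) =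
        (qvec m n + e1v) ::ₘ
          (Multiset.replicate (t + 1) (qvec m n) +
            Multiset.replicate (t + 1) (qvec m (n + 1))) ∧
      ∀ u ∈ BblockF t, nonnegV (phiHatB m n l0 u - u)) ∧
    ∀ l0 l1 : ℤ, 0 ≤ l0 → l0 ≤ (t : ℤ) + 1 → 0 ≤ l1 → l1 ≤ (t : ℤ) + 1 →
      ∃ π : Equiv.Perm {x // x ∈ BblockF t},
        Equiv.Perm.sign π = 1 ∧
        ∀ u : {x // x ∈ BblockF t}, phiHatB m n l1 (π u : V) = phiHatB m n l0 (u : V) := by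

  constructor
  · intro l0 h0 h1
    obtain ⟨k0, rfl⟩ : ∃ k : ℕ, l0 = (k : ℤ) := ⟨l0.toNat, (Int.toNat_of_nonneg h0).symm⟩
    have hk : k0 ≤ t + 1 := by exact_mod_cast h1
    refine ⟨bijOn_phiHat m n t (k0 : ℤ) h0 h1, mult_multiset (m : ℤ) (n : ℤ) t k0 hk, ?_⟩
    intro u hu
    have hmem : phiHatB (m : ℤ) (n : ℤ) (k0 : ℤ) u - u ∈
        (BblockF t).val.map (fun u => phiHatB (m : ℤ) (n : ℤ) (k0 : ℤ) u - u) :=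
      Multiset.mem_map_of_mem _ hu
    rw [mult_multiset (m : ℤ) (n : ℤ) t k0 hk] at hmem
    simp only [Multiset.mem_cons, Multiset.mem_add, Multiset.mem_replicate] at hmem
    rcases hmem with hq | ⟨_, hq⟩ | ⟨_, hq⟩ <;>
      rw [hq] <;> simp only [nonnegV, qvec, e1v, Prod.fst_add, Prod.snd_add] <;>
      refine ⟨by omega, by omega, by omega⟩
  · intro l0 l1 h00 h01 h10 h11
    obtain ⟨k0, rfl⟩ : ∃ k : ℕ, l0 = (k : ℤ) := ⟨l0.toNat, (Int.toNat_of_nonneg h00).symm⟩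
    obtain ⟨k1, rfl⟩ : ∃ k : ℕ, l1 = (k : ℤ) := ⟨l1.toNat, (Int.toNat_of_nonneg h10).symm⟩
    obtain ⟨π0, hs0, hp0⟩ := chain_perm (m : ℤ) (n : ℤ) t k0 (by exact_mod_cast h01)
    obtain ⟨π1, hs1, hp1⟩ := chain_perm (m : ℤ) (n : ℤ) t k1 (by exact_mod_cast h11)
    refine ⟨π1 * π0⁻¹, by rw [map_mul, map_inv, hs1, hs0]; rfl, fun u => ?_⟩
    rw [Equiv.Perm.mul_apply, hp1 (π0⁻¹ u), ← hp0 (π0⁻¹ u), ← Equiv.Perm.mul_apply, mul_inv_cancel, Equiv.Perm.one_apply]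
end

section
/- Fix m, n, τ ∈ ℕ with 2n+2 ≤ m. Suppose ψ : 𝓑 ∖ {u⁰_0} → 𝓒 is an injective map such that every multiplier ψ(u)−u has non-negative entries and no multiplier ψ(u)−u is of the form q_h or q_h+e₁ with h < n. Then at least τ+1 elements u of 𝓑 ∖ {u⁰_0} satisfy ψ(u)−u = q_n. If moreover ψ extends to a bijection 𝓑 → 𝓒 still satisfying these two conditions and in which the multiplier q_n occurs with multiplicity at most τ+1, then the extension equals φ̂_{ℓ₀} for some 0 ≤ ℓ₀ ≤ τ+1. -/
open Finset

namespace SBR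

def b0 (l : ℤ) : V := (0, 3*l, -2*l)
def b1 (l : ℤ) : V := (1, 3*l+1, -2*l-1)
def c0 (m n l : ℤ) : V := (0, 3*(n+l), m-2*(n+l))
def c1 (m n l : ℤ) : V := (1, 3*(n+l)+1, m-2*(n+l)-1)

lemma b0_mem {t : ℕ} {l : ℤ} (h0 : 0 ≤ l) (h1 : l ≤ (t:ℤ)+1) : b0 l ∈ BblockF t := by
  refine Finset.mem_union_left _ (Finset.mem_image.2 ⟨l.toNat, Finset.mem_range.2 (by omega), ?_⟩)
  simp [b0, Int.toNat_of_nonneg h0]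

lemma b1_mem {t : ℕ} {l : ℤ} (h0 : 0 ≤ l) (h1 : l ≤ (t:ℤ)) : b1 l ∈ BblockF t := by
  refine Finset.mem_union_right _ (Finset.mem_image.2 ⟨l.toNat, Finset.mem_range.2 (by omega), ?_⟩)
  simp [b1, Int.toNat_of_nonneg h0]

lemma c0_mem {m n t : ℕ} {l : ℤ} (h0 : 1 ≤ l) (h1 : l ≤ (t:ℤ)+1) : c0 m n l ∈ CblockF m n t := by
  refine Finset.mem_union_left _ (Finset.mem_image.2 ⟨l.toNat, Finset.mem_Icc.2 (by omega), ?_⟩)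
  simp [c0, Int.toNat_of_nonneg (by omega : (0:ℤ) ≤ l)]

lemma c1_mem {m n t : ℕ} {l : ℤ} (h0 : 0 ≤ l) (h1 : l ≤ (t:ℤ)+1) : c1 m n l ∈ CblockF m n t := by
  refine Finset.mem_union_right _ (Finset.mem_image.2 ⟨l.toNat, Finset.mem_range.2 (by omega), ?_⟩)
  simp [c1, Int.toNat_of_nonneg h0]

lemma mem_B_elim {t : ℕ} {u : V} (hu : u ∈ BblockF t) :
    (∃ l : ℤ, 0 ≤ l ∧ l ≤ (t:ℤ)+1 ∧ u = b0 l) ∨ (∃ l : ℤ, 0 ≤ l ∧ l ≤ (t:ℤ) ∧ u = b1 l) := by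
  rcases Finset.mem_union.1 hu with h | h <;> rcases Finset.mem_image.1 h with ⟨l, hl, rfl⟩ <;>
    rw [Finset.mem_range] at hl
  · exact Or.inl ⟨l, by positivity, by exact_mod_cast Nat.lt_succ_iff.1 hl, rfl⟩
  · exact Or.inr ⟨l, by positivity, by exact_mod_cast Nat.lt_succ_iff.1 hl, rfl⟩

lemma mem_C_elim {m n t : ℕ} {v : V} (hv : v ∈ CblockF m n t) :
    (∃ l : ℤ, 1 ≤ l ∧ l ≤ (t:ℤ)+1 ∧ v = c0 m n l) ∨
      (∃ l : ℤ, 0 ≤ l ∧ l ≤ (t:ℤ)+1 ∧ v = c1 m n l) := by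
  rcases Finset.mem_union.1 hv with h | h <;> rcases Finset.mem_image.1 h with ⟨l, hl, rfl⟩
  · rw [Finset.mem_Icc] at hl
    exact Or.inl ⟨l, by exact_mod_cast hl.1, by exact_mod_cast hl.2, rfl⟩
  · rw [Finset.mem_range] at hl
    exact Or.inr ⟨l, by positivity, by exact_mod_cast Nat.lt_succ_iff.1 hl, rfl⟩

lemma b0_inj {l l' : ℤ} (h : b0 l = b0 l') : l = l' := by
  simp [b0, Prod.ext_iff] at h; omega

lemma b1_inj {l l' : ℤ} (h : b1 l = b1 l') : l = l' := by
  simp [b1, Prod.ext_iff] at h; omega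

lemma c0_inj {m n l l' : ℤ} (h : c0 m n l = c0 m n l') : l = l' := by
  simp [c0, Prod.ext_iff] at h; omega

lemma c1_inj {m n l l' : ℤ} (h : c1 m n l = c1 m n l') : l = l' := by
  simp [c1, Prod.ext_iff] at h; omega

lemma b0_ne_b1 {l l' : ℤ} : b0 l ≠ b1 l' := by
  simp [b0, b1, Prod.ext_iff]

lemma c0_ne_c1 {m n l l' : ℤ} : c0 m n l ≠ c1 m n l' := by
  simp [c0, c1, Prod.ext_iff]

/-- index function on both blocks -/
def idx (v : V) : ℤ := v.2.1 - v.1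

@[simp] lemma idx_b0 {l : ℤ} : idx (b0 l) = 3*l := by simp [idx, b0]
@[simp] lemma idx_b1 {l : ℤ} : idx (b1 l) = 3*l := by simp [idx, b1]
@[simp] lemma idx_c0 {m n l : ℤ} : idx (c0 m n l) = 3*(n+l) := by simp [idx, c0]
@[simp] lemma idx_c1 {m n l : ℤ} : idx (c1 m n l) = 3*(n+l) := by simp [idx, c1]

lemma idx_nonneg_C {m n t : ℕ} {v : V} (hv : v ∈ CblockF m n t) : 0 ≤ idx v := by
  rcases mem_C_elim hv with ⟨l, h0, h1, rfl⟩ | ⟨l, h0, h1, rfl⟩ <;> simp <;> omega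

lemma idx_ge_C {m n t : ℕ} {v : V} (hv : v ∈ CblockF m n t) : 3*(n:ℤ) ≤ idx v := by
  rcases mem_C_elim hv with ⟨l, h0, h1, rfl⟩ | ⟨l, h0, h1, rfl⟩ <;> simp <;> omega

end SBR
namespace SBR

lemma target_b1 {m n t : ℕ} {ψ : V → V} {l : ℤ}
    (hC : ψ (b1 l) ∈ CblockF m n t) (hdiv : nonnegV (ψ (b1 l) - b1 l))
    (hno : ∀ h' : ℤ, h' < (n:ℤ) →
      ψ (b1 l) - b1 l ≠ qvec m h' ∧ ψ (b1 l) - b1 l ≠ qvec m h' + e1v) :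
    ∃ l', l ≤ l' ∧ 0 ≤ l' ∧ l' ≤ (t:ℤ)+1 ∧ ψ (b1 l) = c1 m n l' := by
  rcases mem_C_elim hC with ⟨l', h1, h2, heq⟩ | ⟨l', h0, h2, heq⟩
  · exfalso; rw [heq] at hdiv
    simp [c0, b1, nonnegV, Prod.mk_sub_mk] at hdiv
  · refine ⟨l', ?_, h0, h2, heq⟩
    by_contra hlt
    refine (hno ((n:ℤ) + l' - l) (by omega)).1 ?_
    rw [heq]
    simp [c1, b1, qvec, Prod.ext_iff, Prod.mk_sub_mk]
    omega

lemma target_b0 {m n t : ℕ} {ψ : V → V} {l : ℤ}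
    (hC : ψ (b0 l) ∈ CblockF m n t)
    (hno : ∀ h' : ℤ, h' < (n:ℤ) →
      ψ (b0 l) - b0 l ≠ qvec m h' ∧ ψ (b0 l) - b0 l ≠ qvec m h' + e1v) :
    (∃ l', l ≤ l' ∧ 1 ≤ l' ∧ l' ≤ (t:ℤ)+1 ∧ ψ (b0 l) = c0 m n l') ∨
      (∃ l', l ≤ l' ∧ 0 ≤ l' ∧ l' ≤ (t:ℤ)+1 ∧ ψ (b0 l) = c1 m n l') := by
  rcases mem_C_elim hC with ⟨l', h1, h2, heq⟩ | ⟨l', h0, h2, heq⟩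
  · refine Or.inl ⟨l', ?_, h1, h2, heq⟩
    by_contra hlt
    refine (hno ((n:ℤ) + l' - l) (by omega)).1 ?_
    rw [heq]
    simp [c0, b0, qvec, Prod.ext_iff, Prod.mk_sub_mk]
    omega
  · refine Or.inr ⟨l', ?_, h0, h2, heq⟩
    by_contra hlt
    refine (hno ((n:ℤ) + l' - l) (by omega)).2 ?_
    rw [heq]
    simp [c1, b0, qvec, e1v, Prod.ext_iff, Prod.mk_sub_mk]
    omega

lemma step {m n t : ℕ} {ψ : V → V} {u : V} (hu : u ∈ BblockF t)
    (hC : ψ u ∈ CblockF m n t) (hdiv : nonnegV (ψ u - u))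
    (hno : ∀ h' : ℤ, h' < (n:ℤ) → ψ u - u ≠ qvec m h' ∧ ψ u - u ≠ qvec m h' + e1v) :
    ∃ k : ℤ, 0 ≤ k ∧ idx (ψ u) - idx u - 3*n = 3*k ∧
      (ψ u - u = qvec m n ↔ (k = 0 ∧ ¬(u.1 = 0 ∧ (ψ u).1 = 1))) := by
  rcases mem_B_elim hu with ⟨l, h0, h1, rfl⟩ | ⟨l, h0, h1, rfl⟩
  · rcases target_b0 hC hno with ⟨l', hll', h1', h2', heq⟩ | ⟨l', hll', h0', h2', heq⟩
    · refine ⟨l' - l, by omega, by rw [heq]; simp; ring, ?_⟩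
      rw [heq]
      simp [c0, b0, qvec, Prod.ext_iff, Prod.mk_sub_mk]
      omega
    · refine ⟨l' - l, by omega, by rw [heq]; simp; ring, ?_⟩
      rw [heq]
      simp [c1, b0, qvec, Prod.ext_iff, Prod.mk_sub_mk]
      all_goals omega
  · obtain ⟨l', hll', h0', h2', heq⟩ := target_b1 hC hdiv hno
    refine ⟨l' - l, by omega, by rw [heq]; simp; ring, ?_⟩
    rw [heq]
    simp [c1, b1, qvec, Prod.ext_iff, Prod.mk_sub_mk]
    omega

end SBR
namespace SBR

lemma inj_b0 : Function.Injective (fun l : ℕ => ((0 : ℤ), 3 * (l : ℤ), -2 * (l : ℤ))) := by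
  intro a b hab; simp [Prod.ext_iff] at hab; omega

lemma inj_b1 : Function.Injective (fun l : ℕ => ((1 : ℤ), 3 * (l : ℤ) + 1, -2 * (l : ℤ) - 1)) := by
  intro a b hab; simp [Prod.ext_iff] at hab; omega

lemma inj_c0 (m n : ℕ) : Function.Injective (fun l : ℕ =>
    ((0 : ℤ), 3 * ((n : ℤ) + (l : ℤ)), (m : ℤ) - 2 * ((n : ℤ) + (l : ℤ)))) := by
  intro a b hab; simp [Prod.ext_iff] at hab; omega

lemma inj_c1 (m n : ℕ) : Function.Injective (fun l : ℕ =>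
    ((1 : ℤ), 3 * ((n : ℤ) + (l : ℤ)) + 1, (m : ℤ) - 2 * ((n : ℤ) + (l : ℤ)) - 1)) := by
  intro a b hab; simp [Prod.ext_iff] at hab; omega

lemma disj_B (t : ℕ) :
    Disjoint ((Finset.range (t + 2)).image fun l : ℕ => ((0 : ℤ), 3 * (l : ℤ), -2 * (l : ℤ)))
      ((Finset.range (t + 1)).image fun l : ℕ => ((1 : ℤ), 3 * (l : ℤ) + 1, -2 * (l : ℤ) - 1)) := by
  refine Finset.disjoint_left.2 fun x hx hx' => ?_
  rcases Finset.mem_image.1 hx with ⟨l, _, rfl⟩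
  rcases Finset.mem_image.1 hx' with ⟨l', _, hh⟩
  simp [Prod.ext_iff] at hh

lemma disj_C (m n t : ℕ) :
    Disjoint ((Finset.Icc 1 (t + 1)).image fun l : ℕ =>
        ((0 : ℤ), 3 * ((n : ℤ) + (l : ℤ)), (m : ℤ) - 2 * ((n : ℤ) + (l : ℤ))))
      ((Finset.range (t + 2)).image fun l : ℕ =>
        ((1 : ℤ), 3 * ((n : ℤ) + (l : ℤ)) + 1, (m : ℤ) - 2 * ((n : ℤ) + (l : ℤ)) - 1)) := by
  refine Finset.disjoint_left.2 fun x hx hx' => ?_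
  rcases Finset.mem_image.1 hx with ⟨l, _, rfl⟩
  rcases Finset.mem_image.1 hx' with ⟨l', _, hh⟩
  simp [Prod.ext_iff] at hh

lemma card_B (t : ℕ) : (BblockF t).card = 2 * t + 3 := by
  rw [BblockF, Finset.card_union_of_disjoint (disj_B t),
    Finset.card_image_of_injective _ inj_b0, Finset.card_image_of_injective _ inj_b1,
    Finset.card_range, Finset.card_range]
  omega

lemma card_C (m n t : ℕ) : (CblockF m n t).card = 2 * t + 3 := by
  rw [CblockF, Finset.card_union_of_disjoint (disj_C m n t),
    Finset.card_image_of_injective _ (inj_c0 m n), Finset.card_image_of_injective _ (inj_c1 m n),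
    Finset.card_range, Nat.card_Icc]
  omega

lemma sum_lin (k : ℕ) (a : ℤ) :
    ∑ l ∈ Finset.range k, (a + 3 * (l : ℤ)) = k * a + 3 * ∑ l ∈ Finset.range k, (l : ℤ) := by
  rw [Finset.sum_add_distrib, Finset.sum_const, Finset.card_range, Finset.mul_sum, nsmul_eq_mul]

lemma sum_diff (m n t : ℕ) :
    ∑ v ∈ CblockF m n t, idx v =
      ∑ u ∈ BblockF t, idx u + 3 * n * (2 * t + 3) + 3 * (t + 1) := by
  have hIcc : (Finset.Icc 1 (t + 1)) = (Finset.range (t + 2)).erase 0 := by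
    ext x; simp [Finset.mem_Icc, Finset.mem_range]; omega
  rw [CblockF, Finset.sum_union (disj_C m n t), Finset.sum_image (fun a _ b _ h => inj_c0 m n h),
    Finset.sum_image (fun a _ b _ h => inj_c1 m n h), BblockF, Finset.sum_union (disj_B t),
    Finset.sum_image (fun a _ b _ h => inj_b0 h), Finset.sum_image (fun a _ b _ h => inj_b1 h),
    hIcc, Finset.sum_erase_eq_sub (Finset.mem_range.2 (by omega))]
  simp only [idx]
  have e1 : ∑ x ∈ Finset.range (t + 2), ((3 * ((n:ℤ) + (x:ℕ)) - 0)) =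
      ∑ x ∈ Finset.range (t + 2), ((3*(n:ℤ)) + 3 * (x:ℤ)) :=
    Finset.sum_congr rfl fun x _ => by push_cast; ring
  have e2 : ∑ x ∈ Finset.range (t + 2), ((3 * ((n:ℤ) + (x:ℕ)) + 1 - 1)) =
      ∑ x ∈ Finset.range (t + 2), ((3*(n:ℤ)) + 3 * (x:ℤ)) :=
    Finset.sum_congr rfl fun x _ => by push_cast; ring
  have e3 : ∑ x ∈ Finset.range (t + 2), ((3 * ((x:ℕ):ℤ) - 0)) =
      ∑ x ∈ Finset.range (t + 2), ((0:ℤ) + 3 * (x:ℤ)) :=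
    Finset.sum_congr rfl fun x _ => by push_cast; ring
  have e4 : ∑ x ∈ Finset.range (t + 1), ((3 * ((x:ℕ):ℤ) + 1 - 1)) =
      ∑ x ∈ Finset.range (t + 1), ((0:ℤ) + 3 * (x:ℤ)) :=
    Finset.sum_congr rfl fun x _ => by push_cast; ring
  rw [e1, e2, e3, e4, sum_lin, sum_lin, sum_lin,
    Finset.sum_range_succ (fun l : ℕ => (l:ℤ)) (t+1)]
  push_cast
  ring

end SBR
namespace SBR

/-- the `b1` part of the block -/
def B1F (t : ℕ) : Finset V :=
  (Finset.range (t + 1)).image fun l : ℕ => ((1 : ℤ), 3 * (l : ℤ) + 1, -2 * (l : ℤ) - 1)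

/-- the `c1` part of the block -/
def C1F (m n t : ℕ) : Finset V :=
  (Finset.range (t + 2)).image fun l : ℕ =>
    ((1 : ℤ), 3 * ((n : ℤ) + (l : ℤ)) + 1, (m : ℤ) - 2 * ((n : ℤ) + (l : ℤ)) - 1)

lemma B1F_subset (t : ℕ) : B1F t ⊆ BblockF t := fun x hx => Finset.mem_union_right _ hx

lemma card_B1F (t : ℕ) : (B1F t).card = t + 1 := by
  rw [B1F, Finset.card_image_of_injective _ inj_b1, Finset.card_range]

lemma card_C1F (m n t : ℕ) : (C1F m n t).card = t + 2 := by
  rw [C1F, Finset.card_image_of_injective _ (inj_c1 m n), Finset.card_range]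

lemma mem_C1F {m n t : ℕ} {v : V} (hv : v ∈ CblockF m n t) (h1 : v.1 = 1) : v ∈ C1F m n t := by
  rcases Finset.mem_union.1 hv with hh | hh
  · exfalso; rcases Finset.mem_image.1 hh with ⟨l, _, rfl⟩; simp at h1
  · exact hh

lemma mem_B1F {t : ℕ} {u : V} (hu : u ∈ BblockF t) (h1 : u.1 = 1) : u ∈ B1F t := by
  rcases Finset.mem_union.1 hu with hh | hh
  · exfalso; rcases Finset.mem_image.1 hh with ⟨l, _, rfl⟩; simp at h1
  · exact hh

lemma b1_eq_B1F {t : ℕ} {l : ℤ} (h0 : 0 ≤ l) (h1 : l ≤ (t:ℤ)) : b1 l ∈ B1F t := by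
  refine Finset.mem_image.2 ⟨l.toNat, Finset.mem_range.2 (by omega), ?_⟩
  simp [b1, Int.toNat_of_nonneg h0]

/-- at most one element of the domain crosses from the `b0` part to the `c1` part -/
lemma cross_card {m n t : ℕ} {ψ : V → V} {D : Finset V} (hDsub : D ⊆ BblockF t)
    (hB1 : B1F t ⊆ D)
    (hC : ∀ u ∈ D, ψ u ∈ CblockF m n t)
    (hdiv : ∀ u ∈ D, nonnegV (ψ u - u))
    (hno : ∀ u ∈ D, ∀ h' : ℤ, h' < (n:ℤ) → ψ u - u ≠ qvec m h' ∧ ψ u - u ≠ qvec m h' + e1v)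
    (hinj : Set.InjOn ψ (D : Set V)) :
    (D.filter fun u => u.1 = 0 ∧ (ψ u).1 = 1).card ≤ 1 := by
  classical
  set T := D.filter fun u => (ψ u).1 = 1 with hT
  have hTD : T ⊆ D := Finset.filter_subset _ _
  have hTcard : T.card ≤ t + 2 := by
    have himg : T.image ψ ⊆ C1F m n t := by
      intro v hv
      rcases Finset.mem_image.1 hv with ⟨u, hu, rfl⟩
      have huD := hTD hu
      exact mem_C1F (hC u huD) (Finset.mem_filter.1 hu).2
    have : (T.image ψ).card = T.card :=
      Finset.card_image_of_injOn (hinj.mono (by exact_mod_cast hTD))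
    rw [← this]
    calc (T.image ψ).card ≤ (C1F m n t).card := Finset.card_le_card himg
    _ = t + 2 := card_C1F m n t
  have hB1T : B1F t ⊆ T := by
    intro u hu
    refine Finset.mem_filter.2 ⟨hB1 hu, ?_⟩
    rcases Finset.mem_image.1 hu with ⟨l, hl, rfl⟩
    have hmem : ((1:ℤ), 3*(l:ℤ)+1, -2*(l:ℤ)-1) = b1 (l:ℤ) := by simp [b1]
    rw [hmem] at *
    obtain ⟨l', _, _, _, heq⟩ := target_b1 (hC _ (hB1 hu)) (hdiv _ (hB1 hu)) (hno _ (hB1 hu))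
    rw [heq]; simp [c1]
  have hsub : (D.filter fun u => u.1 = 0 ∧ (ψ u).1 = 1) ⊆ T \ B1F t := by
    intro u hu
    rcases Finset.mem_filter.1 hu with ⟨huD, h0, h1⟩
    refine Finset.mem_sdiff.2 ⟨Finset.mem_filter.2 ⟨huD, h1⟩, fun hmem => ?_⟩
    rcases Finset.mem_image.1 hmem with ⟨l, _, rfl⟩
    simp at h0
  calc (D.filter fun u => u.1 = 0 ∧ (ψ u).1 = 1).card ≤ (T \ B1F t).card :=
        Finset.card_le_card hsub
    _ = T.card - (B1F t).card := Finset.card_sdiff_of_subset hB1T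
    _ ≤ 1 := by have := card_B1F t; omega
  
/-- form of a crossing element -/
lemma cross_form {m n t : ℕ} {ψ : V → V} {u : V} (hu : u ∈ BblockF t)
    (hC : ψ u ∈ CblockF m n t)
    (hno : ∀ h' : ℤ, h' < (n:ℤ) → ψ u - u ≠ qvec m h' ∧ ψ u - u ≠ qvec m h' + e1v)
    (h0 : u.1 = 0) (h1 : (ψ u).1 = 1) :
    ∃ l l' : ℤ, 0 ≤ l ∧ l ≤ (t:ℤ)+1 ∧ l ≤ l' ∧ 0 ≤ l' ∧ l' ≤ (t:ℤ)+1 ∧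
      u = b0 l ∧ ψ u = c1 m n l' := by
  rcases mem_B_elim hu with ⟨l, ha, hb, rfl⟩ | ⟨l, ha, hb, rfl⟩
  · rcases target_b0 hC hno with ⟨l', _, _, _, heq⟩ | ⟨l', h2, h3, h4, heq⟩
    · rw [heq] at h1; simp [c0] at h1
    · exact ⟨l, l', ha, hb, h2, h3, h4, rfl, heq⟩
  · simp [b1] at h0

/-- sum bound when an element `v̄` of `𝓒` is missed -/
lemma sum_idx_image_le {m n t : ℕ} {ψ : V → V} {D : Finset V} {vb : V}
    (hC : ∀ u ∈ D, ψ u ∈ CblockF m n t)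
    (hinj : Set.InjOn ψ (D : Set V))
    (hvb : vb ∈ CblockF m n t) (hvbni : vb ∉ D.image ψ) :
    ∑ u ∈ D, idx (ψ u) ≤ ∑ v ∈ CblockF m n t, idx v - idx vb := by
  have h1 : ∑ u ∈ D, idx (ψ u) = ∑ v ∈ D.image ψ, idx v :=
    (Finset.sum_image fun a ha b hb hh =>
      hinj (Finset.mem_coe.2 ha) (Finset.mem_coe.2 hb) hh).symm
  have h2 : D.image ψ ⊆ (CblockF m n t).erase vb := by
    intro v hv
    refine Finset.mem_erase.2 ⟨fun he => hvbni (he ▸ hv), ?_⟩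
    rcases Finset.mem_image.1 hv with ⟨u, hu, rfl⟩
    exact hC u hu
  rw [h1, ← Finset.sum_erase_eq_sub hvb]
  refine Finset.sum_le_sum_of_subset_of_nonneg h2 fun v hv _ => ?_
  exact idx_nonneg_C (Finset.mem_erase.1 hv).2

end SBR
namespace SBR

lemma b0_zero : b0 0 = ((0,0,0) : V) := by simp [b0]

lemma zero_mem_B (t : ℕ) : ((0,0,0) : V) ∈ BblockF t := b0_zero ▸ b0_mem le_rfl (by omega)

def B0F (t : ℕ) : Finset V :=
  (Finset.range (t + 2)).image fun l : ℕ => ((0 : ℤ), 3 * (l : ℤ), -2 * (l : ℤ))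

def C0F (m n t : ℕ) : Finset V :=
  (Finset.Icc 1 (t + 1)).image fun l : ℕ =>
    ((0 : ℤ), 3 * ((n : ℤ) + (l : ℤ)), (m : ℤ) - 2 * ((n : ℤ) + (l : ℤ)))

lemma card_C0F (m n t : ℕ) : (C0F m n t).card = t + 1 := by
  rw [C0F, Finset.card_image_of_injective _ (inj_c0 m n), Nat.card_Icc]
  omega

lemma mem_B0F {t : ℕ} {u : V} (hu : u ∈ BblockF t) (h1 : u.1 = 0) : u ∈ B0F t := by
  rcases Finset.mem_union.1 hu with hh | hh
  · exact hh
  · exfalso; rcases Finset.mem_image.1 hh with ⟨l, _, rfl⟩; simp at h1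

lemma mem_C0F {m n t : ℕ} {v : V} (hv : v ∈ CblockF m n t) (h1 : v.1 = 0) : v ∈ C0F m n t := by
  rcases Finset.mem_union.1 hv with hh | hh
  · exact hh
  · exfalso; rcases Finset.mem_image.1 hh with ⟨l, _, rfl⟩; simp at h1

lemma C0F_subset (m n t : ℕ) : C0F m n t ⊆ CblockF m n t := fun x hx =>
  Finset.mem_union_left _ hx

lemma idx_ge_C0F {m n t : ℕ} {v : V} (hv : v ∈ C0F m n t) : 3*((n:ℤ)+1) ≤ idx v := by
  rcases Finset.mem_image.1 hv with ⟨l, hl, rfl⟩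
  rw [Finset.mem_Icc] at hl
  simp [idx]
  have : (1:ℤ) ≤ (l:ℤ) := by exact_mod_cast hl.1
  omega

lemma part1 (m n t : ℕ) (ψ : V → V)
    (hC : ∀ u ∈ (BblockF t).erase ((0,0,0) : V), ψ u ∈ CblockF m n t)
    (hdiv : ∀ u ∈ (BblockF t).erase ((0,0,0) : V), nonnegV (ψ u - u))
    (hno : ∀ u ∈ (BblockF t).erase ((0,0,0) : V), ∀ h' : ℤ, h' < (n:ℤ) →
      ψ u - u ≠ qvec m h' ∧ ψ u - u ≠ qvec m h' + e1v)
    (hinj : Set.InjOn ψ (((BblockF t).erase ((0,0,0) : V)) : Set V)) :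
    t + 1 ≤ (((BblockF t).erase ((0,0,0) : V)).filter fun u => ψ u - u = qvec m n).card := by
  classical
  set D := (BblockF t).erase ((0,0,0) : V) with hD
  have hDsub : D ⊆ BblockF t := Finset.erase_subset _ _
  have hDcard : D.card = 2*t + 2 := by
    rw [hD, Finset.card_erase_of_mem (zero_mem_B t), card_B]
    omega
  have hB1D : B1F t ⊆ D := by
    intro x hx
    refine Finset.mem_erase.2 ⟨?_, B1F_subset t hx⟩
    rcases Finset.mem_image.1 hx with ⟨l, _, rfl⟩
    simp [Prod.ext_iff]
  -- the shift function
  set s : V → ℤ := fun u => idx (ψ u) - idx u - 3*n with hs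
  have hstep : ∀ u ∈ D, ∃ k : ℤ, 0 ≤ k ∧ s u = 3*k ∧
      (ψ u - u = qvec m n ↔ (k = 0 ∧ ¬(u.1 = 0 ∧ (ψ u).1 = 1))) := fun u hu =>
    step (hDsub hu) (hC u hu) (hdiv u hu) (hno u hu)
  have hs_nonneg : ∀ u ∈ D, 0 ≤ s u := by
    intro u hu; obtain ⟨k, hk0, hk1, _⟩ := hstep u hu; omega
  have hs3 : ∀ u ∈ D, 0 < s u → 3 ≤ s u := by
    intro u hu hpos; obtain ⟨k, hk0, hk1, _⟩ := hstep u hu; omega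
  set cross := D.filter (fun u => u.1 = 0 ∧ (ψ u).1 = 1) with hcross
  set shifted := D.filter (fun u => 0 < s u) with hshifted
  set bad := D.filter (fun u => ¬(ψ u - u = qvec m n)) with hbad
  -- sum over D of idx
  have hsumD : ∑ u ∈ D, idx u = ∑ u ∈ BblockF t, idx u := by
    rw [hD]
    exact Finset.sum_erase _ (by simp [idx])
  -- total shift bound, given a missing element
  have hshift_bound : ∀ vb ∈ CblockF m n t, vb ∉ D.image ψ →
      3 * ((shifted.card : ℤ)) ≤ 3*(t:ℤ) + 3 + 3*(n:ℤ) - idx vb := by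
    intro vb hvb hvbni
    have h1 : ∑ u ∈ D, idx (ψ u) ≤ ∑ v ∈ CblockF m n t, idx v - idx vb :=
      sum_idx_image_le hC hinj hvb hvbni
    have h2 : ∑ u ∈ D, s u = ∑ u ∈ D, idx (ψ u) - ∑ u ∈ D, idx u - (2*t+2) * (3*(n:ℤ)) := by
      rw [hs]
      rw [Finset.sum_sub_distrib, Finset.sum_sub_distrib, Finset.sum_const, hDcard,
        nsmul_eq_mul]
      push_cast; ring
    have h3 : 3 * ((shifted.card : ℤ)) = ∑ u ∈ shifted, (3:ℤ) := by
      rw [Finset.sum_const, nsmul_eq_mul]; ring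
    have h4 : ∑ u ∈ shifted, (3:ℤ) ≤ ∑ u ∈ shifted, s u :=
      Finset.sum_le_sum fun u hu => hs3 u (Finset.mem_filter.1 hu).1 (Finset.mem_filter.1 hu).2
    have h5 : ∑ u ∈ shifted, s u ≤ ∑ u ∈ D, s u :=
      Finset.sum_le_sum_of_subset_of_nonneg (Finset.filter_subset _ _)
        (fun u hu _ => hs_nonneg u hu)
    have h6 := sum_diff m n t
    rw [hsumD] at h2
    push_cast at *
    linarith
  -- bad ⊆ shifted ∪ cross
  have hbadsub : bad ⊆ shifted ∪ cross := by
    intro u hu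
    rcases Finset.mem_filter.1 hu with ⟨huD, hng⟩
    obtain ⟨k, hk0, hk1, hiff⟩ := hstep u huD
    rcases lt_or_ge 0 (s u) with hpos | hle
    · exact Finset.mem_union_left _ (Finset.mem_filter.2 ⟨huD, hpos⟩)
    · have hk : k = 0 := by omega
      refine Finset.mem_union_right _ (Finset.mem_filter.2 ⟨huD, ?_⟩)
      by_contra hcc
      exact hng (hiff.2 ⟨hk, hcc⟩)
  have hbadcard : bad.card ≤ t + 1 := by
    rcases Finset.eq_empty_or_nonempty cross with hemp | ⟨ustar, hustar⟩
    · -- no crossing: any missing element works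
      have hmiss : ∃ vb ∈ CblockF m n t, vb ∉ D.image ψ := by
        by_contra hcon
        push_neg at hcon
        have hsub : CblockF m n t ⊆ D.image ψ := fun v hv => hcon v hv
        have h1 := Finset.card_le_card hsub
        have h2 : (D.image ψ).card = D.card := Finset.card_image_of_injOn hinj
        rw [card_C, h2, hDcard] at h1
        omega
      obtain ⟨vb, hvb, hvbni⟩ := hmiss
      have h1 := hshift_bound vb hvb hvbni
      have h2 := idx_ge_C hvb
      have h3 : shifted.card ≤ t + 1 := by
        have : 3 * ((shifted.card : ℤ)) ≤ 3*(t:ℤ) + 3 := by linarith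
        exact_mod_cast (by linarith : ((shifted.card : ℤ)) ≤ (t:ℤ) + 1)
      calc bad.card ≤ (shifted ∪ cross).card := Finset.card_le_card hbadsub
        _ ≤ shifted.card + cross.card := Finset.card_union_le _ _
        _ ≤ t + 1 := by rw [hemp]; simpa using h3
    · -- there is a crossing element; a `c0`-element is missed
      have hucross := Finset.mem_filter.1 hustar
      have hcc : cross.card ≤ 1 := cross_card hDsub hB1D hC hdiv hno hinj
      -- U0 : sources hitting C0F
      set U0 := D.filter (fun u => (ψ u).1 = 0) with hU0
      have hU0card : U0.card ≤ t := by
        have hsub : U0 ⊆ (((BblockF t).filter (fun u => u.1 = 0)).erase ((0,0,0) : V)).erase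
            ustar := by
          intro u hu
          rcases Finset.mem_filter.1 hu with ⟨huD, hpsi0⟩
          have hune : u ≠ ((0,0,0) : V) := (Finset.mem_erase.1 huD).1
          have hu0 : u.1 = 0 := by
            rcases mem_B_elim (hDsub huD) with ⟨l, _, _, rfl⟩ | ⟨l, hl0, hl1, rfl⟩
            · simp [b0]
            · exfalso
              obtain ⟨l', _, _, _, heq⟩ := target_b1 (hC _ huD) (hdiv _ huD) (hno _ huD)
              rw [heq] at hpsi0; simp [c1] at hpsi0
          refine Finset.mem_erase.2 ⟨?_, Finset.mem_erase.2
            ⟨hune, Finset.mem_filter.2 ⟨hDsub huD, hu0⟩⟩⟩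
          intro he
          rw [he] at hpsi0
          exact absurd hucross.2.2 (by omega)
        have h2 : (BblockF t).filter (fun u => u.1 = 0) ⊆ B0F t := by
          intro u hu
          exact mem_B0F (Finset.mem_filter.1 hu).1 (Finset.mem_filter.1 hu).2
        have h3 : ((BblockF t).filter (fun u => u.1 = 0)).card ≤ t + 2 := by
          calc _ ≤ (B0F t).card := Finset.card_le_card h2
            _ = t + 2 := by rw [B0F, Finset.card_image_of_injective _ inj_b0, Finset.card_range]
        have h4 : ustar ∈ ((BblockF t).filter (fun u => u.1 = 0)).erase ((0,0,0) : V) :=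
          Finset.mem_erase.2 ⟨(Finset.mem_erase.1 hucross.1).1,
            Finset.mem_filter.2 ⟨hDsub hucross.1, hucross.2.1⟩⟩
        have h5 : ((0,0,0) : V) ∈ (BblockF t).filter (fun u => u.1 = 0) :=
          Finset.mem_filter.2 ⟨zero_mem_B t, rfl⟩
        calc U0.card ≤ ((((BblockF t).filter (fun u => u.1 = 0)).erase ((0,0,0):V)).erase
              ustar).card := Finset.card_le_card hsub
          _ = (((BblockF t).filter (fun u => u.1 = 0)).erase ((0,0,0):V)).card - 1 :=
              Finset.card_erase_of_mem h4
          _ = ((BblockF t).filter (fun u => u.1 = 0)).card - 1 - 1 := by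
              rw [Finset.card_erase_of_mem h5]
          _ ≤ t := by omega
      have hmiss : ∃ vb ∈ C0F m n t, vb ∉ D.image ψ := by
        by_contra hcon
        push_neg at hcon
        have hsub2 : C0F m n t ⊆ U0.image ψ := by
          intro v hv
          obtain ⟨lv, hlv, hveq⟩ := Finset.mem_image.1 hv
          have hvD := hcon v hv
          obtain ⟨u, hu, huq⟩ := Finset.mem_image.1 hvD
          refine Finset.mem_image.2 ⟨u, Finset.mem_filter.2 ⟨hu, ?_⟩, huq⟩
          rw [huq, ← hveq]
        have h6 := Finset.card_le_card hsub2
        have h7 := Finset.card_image_le (f := ψ) (s := U0)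
        rw [card_C0F] at h6
        omega
      obtain ⟨vb, hvb0, hvbni⟩ := hmiss
      have h1 := hshift_bound vb (C0F_subset m n t hvb0) hvbni
      have h2 := idx_ge_C0F hvb0
      have h3 : shifted.card ≤ t := by
        have h8 : 3 * ((shifted.card : ℤ)) ≤ 3*(t:ℤ) := by push_cast at h2 ⊢; linarith
        exact_mod_cast (by linarith : ((shifted.card : ℤ)) ≤ (t:ℤ))
      calc bad.card ≤ (shifted ∪ cross).card := Finset.card_le_card hbadsub
        _ ≤ shifted.card + cross.card := Finset.card_union_le _ _
        _ ≤ t + 1 := by omega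
  have hsplit : (D.filter fun u => ψ u - u = qvec m n).card + bad.card = D.card := by
    rw [hbad]
    exact Finset.card_filter_add_card_filter_not _
  omega

end SBR
namespace SBR

lemma div3 (l : ℤ) : 3 * l / 3 = l := Int.mul_ediv_cancel_left l (by norm_num)

lemma phiHat_b0_lt {m n l l0 : ℤ} (h : l < l0) : phiHatB m n l0 (b0 l) = c0 m n (l+1) := by
  simp only [phiHatB, b0, c0, div3, if_pos rfl, if_pos h]
  simp [Prod.ext_iff]
  omega

lemma phiHat_b0_eq {m n l0 : ℤ} : phiHatB m n l0 (b0 l0) = c1 m n l0 := by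
  simp only [phiHatB, b0, c1, div3]
  simp [lt_irrefl]

lemma phiHat_b0_gt {m n l l0 : ℤ} (h : l0 < l) : phiHatB m n l0 (b0 l) = c0 m n l := by
  simp only [phiHatB, b0, c0, div3]
  rw [if_pos trivial, if_neg (by omega : ¬ l < l0), if_neg (by omega : ¬ l = l0)]

lemma phiHat_b1_lt {m n l l0 : ℤ} (h : l < l0) : phiHatB m n l0 (b1 l) = c1 m n l := by
  have h31 : (3*l+1-1)/3 = l := by rw [show 3*l+1-1 = 3*l by ring, div3]
  simp only [phiHatB, b1]
  simp [h31, h, c1]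

lemma phiHat_b1_ge {m n l l0 : ℤ} (h : l0 ≤ l) : phiHatB m n l0 (b1 l) = c1 m n (l+1) := by
  have h31 : (3*l+1-1)/3 = l := by rw [show 3*l+1-1 = 3*l by ring, div3]
  simp only [phiHatB, b1]
  simp only [one_ne_zero, ↓reduceIte]
  simp only [h31]
  rw [if_neg (by omega : ¬ l < l0)]
  simp [c1, Prod.ext_iff]
  omega

end SBR
namespace SBR

lemma part2 (m n t : ℕ) (Ψ : V → V)
    (hbij : Set.BijOn Ψ ((BblockF t : Finset V) : Set V) ((CblockF m n t : Finset V) : Set V))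
    (hdiv : ∀ u ∈ BblockF t, nonnegV (Ψ u - u))
    (hno : ∀ u ∈ BblockF t, ∀ h' : ℤ, h' < (n:ℤ) →
      Ψ u - u ≠ qvec m h' ∧ Ψ u - u ≠ qvec m h' + e1v)
    (hcnt : ((BblockF t).filter (fun u => Ψ u - u = qvec m n)).card ≤ t + 1) :
    ∃ l0 : ℤ, 0 ≤ l0 ∧ l0 ≤ (t:ℤ) + 1 ∧ ∀ u ∈ BblockF t, Ψ u = phiHatB m n l0 u := by
  classical
  have hC : ∀ u ∈ BblockF t, Ψ u ∈ CblockF m n t := fun u hu => by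
    exact_mod_cast hbij.mapsTo (Finset.mem_coe.2 hu)
  have hinj : Set.InjOn Ψ ((BblockF t : Finset V) : Set V) := hbij.injOn
  have hinjp : ∀ {u v : V}, u ∈ BblockF t → v ∈ BblockF t → Ψ u = Ψ v → u = v :=
    fun hu hv he => hinj (Finset.mem_coe.2 hu) (Finset.mem_coe.2 hv) he
  set D := BblockF t with hD
  -- shift function
  set s : V → ℤ := fun u => idx (Ψ u) - idx u - 3*n with hs
  have hstep : ∀ u ∈ D, ∃ k : ℤ, 0 ≤ k ∧ s u = 3*k ∧
      (Ψ u - u = qvec m n ↔ (k = 0 ∧ ¬(u.1 = 0 ∧ (Ψ u).1 = 1))) := fun u hu =>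
    step hu (hC u hu) (hdiv u hu) (hno u hu)
  have hs_nonneg : ∀ u ∈ D, 0 ≤ s u := by
    intro u hu; obtain ⟨k, hk0, hk1, _⟩ := hstep u hu; omega
  have hs3 : ∀ u ∈ D, 0 < s u → 3 ≤ s u := by
    intro u hu hpos; obtain ⟨k, hk0, hk1, _⟩ := hstep u hu; omega
  set cross := D.filter (fun u => u.1 = 0 ∧ (Ψ u).1 = 1) with hcross
  set shifted := D.filter (fun u => 0 < s u) with hshifted
  set bad := D.filter (fun u => ¬(Ψ u - u = qvec m n)) with hbad
  -- the image is everything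
  have himg : D.image Ψ = CblockF m n t := by
    refine Finset.eq_of_subset_of_card_le (fun v hv => ?_) ?_
    · rcases Finset.mem_image.1 hv with ⟨u, hu, rfl⟩; exact hC u hu
    · rw [Finset.card_image_of_injOn hinj, card_C, card_B]
  -- total shift sum is exactly 3(t+1)
  have hSsum : ∑ u ∈ D, s u = 3*((t:ℤ)+1) := by
    have h1 : ∑ u ∈ D, idx (Ψ u) = ∑ v ∈ CblockF m n t, idx v := by
      rw [← himg]
      exact (Finset.sum_image fun a ha b hb hh =>
        hinj (Finset.mem_coe.2 ha) (Finset.mem_coe.2 hb) hh).symm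
    have hcardD : D.card = 2*t+3 := by rw [hD]; exact card_B t
    have h2 : ∑ u ∈ D, s u = ∑ u ∈ D, idx (Ψ u) - ∑ u ∈ D, idx u - (2*t+3) * (3*(n:ℤ)) := by
      rw [hs]
      rw [Finset.sum_sub_distrib, Finset.sum_sub_distrib, Finset.sum_const, hcardD,
        nsmul_eq_mul]
      push_cast; ring
    have h3 := sum_diff m n t
    rw [h1, h3] at h2
    rw [h2]; push_cast; ring
  -- bad ⊆ shifted ∪ cross
  have hbadsub : bad ⊆ shifted ∪ cross := by
    intro u hu
    rcases Finset.mem_filter.1 hu with ⟨huD, hng⟩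
    obtain ⟨k, hk0, hk1, hiff⟩ := hstep u huD
    rcases lt_or_ge 0 (s u) with hpos | hle
    · exact Finset.mem_union_left _ (Finset.mem_filter.2 ⟨huD, hpos⟩)
    · have hk : k = 0 := by omega
      refine Finset.mem_union_right _ (Finset.mem_filter.2 ⟨huD, ?_⟩)
      by_contra hcc
      exact hng (hiff.2 ⟨hk, hcc⟩)
  have hbadge : t + 2 ≤ bad.card := by
    have hsplit : (D.filter fun u => Ψ u - u = qvec m n).card + bad.card = D.card := by
      rw [hbad]
      exact Finset.card_filter_add_card_filter_not _
    have hcardD : D.card = 2*t+3 := by rw [hD]; exact card_B t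
    omega
  have hshiftedcard : shifted.card ≤ t + 1 := by
    have h3 : 3 * ((shifted.card : ℤ)) = ∑ u ∈ shifted, (3:ℤ) := by
      rw [Finset.sum_const, nsmul_eq_mul]; ring
    have h4 : ∑ u ∈ shifted, (3:ℤ) ≤ ∑ u ∈ shifted, s u :=
      Finset.sum_le_sum fun u hu => hs3 u (Finset.mem_filter.1 hu).1 (Finset.mem_filter.1 hu).2
    have h5 : ∑ u ∈ shifted, s u ≤ ∑ u ∈ D, s u :=
      Finset.sum_le_sum_of_subset_of_nonneg (Finset.filter_subset _ _)
        (fun u hu _ => hs_nonneg u hu)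
    have : 3 * ((shifted.card : ℤ)) ≤ 3*((t:ℤ)+1) := by rw [h3]; linarith [hSsum]
    exact_mod_cast (by linarith : ((shifted.card : ℤ)) ≤ (t:ℤ)+1)
  have hcrosscard : cross.card ≤ 1 :=
    cross_card (le_refl D) (B1F_subset t) hC hdiv hno hinj
  -- there is a crossing element with zero shift
  have hustar : ∃ ustar ∈ cross, ustar ∉ shifted := by
    by_contra hcon
    push_neg at hcon
    have hsub2 : bad ⊆ shifted := by
      intro u hu
      rcases Finset.mem_union.1 (hbadsub hu) with h1 | h1
      · exact h1
      · exact hcon u h1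
    have := Finset.card_le_card hsub2
    omega
  obtain ⟨ustar, hustarc, hustars⟩ := hustar
  have hustarD : ustar ∈ D := (Finset.mem_filter.1 hustarc).1
  have hustar0 : s ustar = 0 := by
    have h1 := hs_nonneg ustar hustarD
    have h2 : ¬ 0 < s ustar := fun hh => hustars (Finset.mem_filter.2 ⟨hustarD, hh⟩)
    omega
  -- cross is exactly {ustar}
  have hcross_unique : ∀ u ∈ cross, u = ustar := by
    intro u hu
    exact Finset.card_le_one.1 hcrosscard u hu ustar hustarc
  -- every shift is at most 3
  have hall : ∀ u ∈ D, s u ≤ 3 := by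
    have hsum_split : ∑ u ∈ shifted, s u + ∑ u ∈ D.filter (fun u => ¬ 0 < s u), s u
        = ∑ u ∈ D, s u := by
      rw [hshifted]
      exact Finset.sum_filter_add_sum_filter_not D _ s
    have hzero : ∑ u ∈ D.filter (fun u => ¬ 0 < s u), s u = 0 :=
      Finset.sum_eq_zero fun u hu => by
        have h1 := hs_nonneg u (Finset.mem_filter.1 hu).1
        have h2 := (Finset.mem_filter.1 hu).2
        omega
    have hsum_shifted : ∑ u ∈ shifted, s u = 3*((t:ℤ)+1) := by
      rw [← hSsum, ← hsum_split, hzero, add_zero]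
    have heach : ∀ u ∈ shifted, s u = 3 := by
      have hle : ∀ u ∈ shifted, (3:ℤ) ≤ s u :=
        fun u hu => hs3 u (Finset.mem_filter.1 hu).1 (Finset.mem_filter.1 hu).2
      have hconst : ∑ u ∈ shifted, (3:ℤ) = ∑ u ∈ shifted, s u := by
        rw [hsum_shifted, Finset.sum_const, nsmul_eq_mul]
        have h6 : t + 1 ≤ shifted.card := by
          have h7 := Finset.card_le_card hbadsub
          have h8 := Finset.card_union_le shifted cross
          omega
        have h9 : shifted.card = t + 1 := le_antisymm hshiftedcard h6
        rw [h9]; push_cast; ring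
      intro u hu
      have := (Finset.sum_eq_sum_iff_of_le hle).1 hconst u hu
      omega
    intro u hu
    rcases lt_or_ge 0 (s u) with hpos | hle
    · exact le_of_eq (heach u (Finset.mem_filter.2 ⟨hu, hpos⟩))
    · omega
  -- identify ustar
  obtain ⟨l0, l0', hl00, hl0t, hl0le, _, hl0't, hueq, hpsieq⟩ :=
    cross_form hustarD (hC ustar hustarD) (hno ustar hustarD)
      (Finset.mem_filter.1 hustarc).2.1 (Finset.mem_filter.1 hustarc).2.2
  have hl0'eq : l0' = l0 := by
    have : s ustar = 3*(l0' - l0) := by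
      rw [hs]; simp only []
      rw [hpsieq, hueq]; simp; ring
    omega
  subst hl0'eq
  rw [hueq] at hpsieq hustarD hustarc
  -- step lemmas with shift ≤ 1
  have hstep0 : ∀ l : ℤ, 0 ≤ l → l ≤ (t:ℤ)+1 → l ≠ l0' →
      ∃ l', (l' = l ∨ l' = l+1) ∧ 1 ≤ l' ∧ l' ≤ (t:ℤ)+1 ∧ Ψ (b0 l) = c0 m n l' := by
    intro l ha hb hne
    have hmem : b0 l ∈ D := b0_mem ha hb
    rcases target_b0 (hC _ hmem) (hno _ hmem) with ⟨l', h1, h2, h3, heq⟩ | ⟨l', h1, h2, h3, heq⟩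
    · refine ⟨l', ?_, h2, h3, heq⟩
      have hsl := hall _ hmem
      rw [hs] at hsl; simp only [] at hsl
      rw [heq] at hsl; simp at hsl
      omega
    · exfalso
      have : b0 l ∈ cross := by
        refine Finset.mem_filter.2 ⟨hmem, by simp [b0], ?_⟩
        rw [heq]; simp [c1]
      have h9 := hcross_unique _ this
      rw [hueq] at h9
      exact hne (b0_inj h9)
  have hstep1 : ∀ l : ℤ, 0 ≤ l → l ≤ (t:ℤ) →
      ∃ l', (l' = l ∨ l' = l+1) ∧ 0 ≤ l' ∧ l' ≤ (t:ℤ)+1 ∧ Ψ (b1 l) = c1 m n l' := by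
    intro l ha hb
    have hmem : b1 l ∈ D := b1_mem ha hb
    obtain ⟨l', h1, h2, h3, heq⟩ := target_b1 (hC _ hmem) (hdiv _ hmem) (hno _ hmem)
    refine ⟨l', ?_, h2, h3, heq⟩
    have hsl := hall _ hmem
    rw [hs] at hsl; simp only [] at hsl
    rw [heq] at hsl; simp at hsl
    omega
  -- chain (A): below l0, b0 shifts up
  have hA : ∀ j : ℕ, ((j:ℤ)) < l0' → Ψ (b0 (j:ℤ)) = c0 m n ((j:ℤ)+1) := by
    intro j
    induction j with
    | zero =>
      intro hj
      simp only [Nat.cast_zero]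
      obtain ⟨l', hor, h1', h2', heq⟩ := hstep0 0 le_rfl (by omega) (by omega)
      have : l' = 1 := by omega
      rw [heq, this]; norm_num
    | succ j ih =>
      intro hj
      push_cast at hj ⊢
      obtain ⟨l', hor, h1', h2', heq⟩ := hstep0 ((j:ℤ)+1) (by omega) (by omega) (by omega)
      rcases hor with hl' | hl'
      · exfalso
        have hih := ih (by omega)
        have : b0 ((j:ℤ)) = b0 ((j:ℤ)+1) := by
          refine hinjp (b0_mem (by omega) (by omega)) (b0_mem (by omega) (by omega)) ?_
          rw [hih, heq, hl']
        have := b0_inj this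
        omega
      · rw [heq, hl']
  -- chain (B): above l0, b0 stays
  have hB : ∀ d : ℕ, ∀ l : ℤ, l = (t:ℤ)+1-(d:ℤ) → l0' < l → Ψ (b0 l) = c0 m n l := by
    intro d
    induction d with
    | zero =>
      intro l hl hgt
      obtain ⟨l', hor, h1', h2', heq⟩ := hstep0 l (by omega) (by omega) (by omega)
      have : l' = l := by omega
      rw [heq, this]
    | succ d ih =>
      intro l hl hgt
      push_cast at hl
      obtain ⟨l', hor, h1', h2', heq⟩ := hstep0 l (by omega) (by omega) (by omega)
      rcases hor with hl' | hl'
      · rw [heq, hl']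
      · exfalso
        have hih := ih (l+1) (by omega) (by omega)
        have : b0 l = b0 (l+1) := by
          refine hinjp (b0_mem (by omega) (by omega)) (b0_mem (by omega) (by omega)) ?_
          rw [hih, heq, hl']
        have := b0_inj this
        omega
  -- chain (C): below l0, b1 stays
  have hC1 : ∀ d : ℕ, ∀ l : ℤ, l = l0'-1-(d:ℤ) → 0 ≤ l → Ψ (b1 l) = c1 m n l := by
    intro d
    induction d with
    | zero =>
      intro l hl h0
      obtain ⟨l', hor, h1', h2', heq⟩ := hstep1 l h0 (by omega)
      rcases hor with hl' | hl'
      · rw [heq, hl']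
      · exfalso
        have : b1 l = b0 l0' := by
          refine hinjp (b1_mem h0 (by omega)) (b0_mem (by omega) (by omega)) ?_
          rw [heq, hpsieq, hl', hl]; norm_num
        exact b0_ne_b1 this.symm
    | succ d ih =>
      intro l hl h0
      push_cast at hl
      obtain ⟨l', hor, h1', h2', heq⟩ := hstep1 l h0 (by omega)
      rcases hor with hl' | hl'
      · rw [heq, hl']
      · exfalso
        have hih := ih (l+1) (by omega) (by omega)
        have : b1 l = b1 (l+1) := by
          refine hinjp (b1_mem h0 (by omega)) (b1_mem (by omega) (by omega)) ?_
          rw [hih, heq, hl']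
        have := b1_inj this
        omega
  -- chain (D): from l0 on, b1 shifts up
  have hD1 : ∀ j : ℕ, l0' ≤ (j:ℤ) → (j:ℤ) ≤ (t:ℤ) → Ψ (b1 (j:ℤ)) = c1 m n ((j:ℤ)+1) := by
    intro j
    induction j with
    | zero =>
      intro hj hjt
      simp only [Nat.cast_zero] at hj ⊢
      obtain ⟨l', hor, h1', h2', heq⟩ := hstep1 0 le_rfl (by omega)
      rcases hor with hl' | hl'
      · exfalso
        have : b1 (0:ℤ) = b0 l0' := by
          refine hinjp (b1_mem le_rfl (by omega)) (b0_mem (by omega) (by omega)) ?_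
          rw [heq, hpsieq, hl']
          have : l0' = 0 := by omega
          rw [this]
        exact b0_ne_b1 this.symm
      · rw [heq, hl']
    | succ j ih =>
      intro hj hjt
      push_cast at hj hjt ⊢
      obtain ⟨l', hor, h1', h2', heq⟩ := hstep1 ((j:ℤ)+1) (by omega) (by omega)
      rcases hor with hl' | hl'
      · exfalso
        rcases eq_or_lt_of_le hj with hc | hc
        · have : b1 ((j:ℤ)+1) = b0 l0' := by
            refine hinjp (b1_mem (by omega) (by omega)) (b0_mem (by omega) (by omega)) ?_
            rw [heq, hpsieq, hl', ← hc]
          exact b0_ne_b1 this.symm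
        · have hih := ih (by omega) (by omega)
          have : b1 ((j:ℤ)) = b1 ((j:ℤ)+1) := by
            refine hinjp (b1_mem (by omega) (by omega)) (b1_mem (by omega) (by omega)) ?_
            rw [hih, heq, hl']
          have := b1_inj this
          omega
      · rw [heq, hl']
  -- assemble
  refine ⟨l0', by omega, by omega, ?_⟩
  intro u hu
  rcases mem_B_elim hu with ⟨l, ha, hb, rfl⟩ | ⟨l, ha, hb, rfl⟩
  · rcases lt_trichotomy l l0' with hlt | heq' | hgt
    · have hln : ((l.toNat : ℕ) : ℤ) = l := Int.toNat_of_nonneg ha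
      have := hA l.toNat (by omega)
      rw [hln] at this
      rw [this, phiHat_b0_lt hlt]
    · subst heq'
      rw [hpsieq, phiHat_b0_eq]
    · have hd : ((((t:ℤ)+1-l).toNat : ℕ) : ℤ) = (t:ℤ)+1-l := Int.toNat_of_nonneg (by omega)
      have := hB ((t:ℤ)+1-l).toNat l (by omega) hgt
      rw [this, phiHat_b0_gt hgt]
  · rcases lt_or_ge l l0' with hlt | hge
    · have := hC1 (l0'-1-l).toNat l (by omega) ha
      rw [this, phiHat_b1_lt hlt]
    · have hln : ((l.toNat : ℕ) : ℤ) = l := Int.toNat_of_nonneg ha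
      have := hD1 l.toNat (by omega) (by omega)
      rw [hln] at this
      rw [this, phiHat_b1_ge hge]

end SBR

/-- **Lemma `cabninjetive`.** Rigidity of injections `𝓑 ∖ {u⁰₀} → 𝓒`
satisfying Divisibility and avoiding multipliers `q_h`, `q_h + e₁` with `h < n`. -/
theorem special_block_rigidity (m n t : ℕ) (h : 2 * n + 2 ≤ m) (ψ : V → V)
    (hmaps : Set.MapsTo ψ ((BblockF t : Set V) \ {((0, 0, 0) : V)}) (CblockF m n t : Set V))
    (hinj : Set.InjOn ψ ((BblockF t : Set V) \ {((0, 0, 0) : V)}))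
    (hdiv : ∀ u ∈ (BblockF t : Set V) \ {((0, 0, 0) : V)}, nonnegV (ψ u - u))
    (hno : ∀ u ∈ (BblockF t : Set V) \ {((0, 0, 0) : V)}, ∀ h' : ℤ, h' < (n : ℤ) →
      ψ u - u ≠ qvec m h' ∧ ψ u - u ≠ qvec m h' + e1v) :
    (t + 1 ≤ (((BblockF t).erase ((0, 0, 0) : V)).filter
      (fun u => ψ u - u = qvec m n)).card) ∧
    ∀ Ψ : V → V, Set.BijOn Ψ (BblockF t : Set V) (CblockF m n t : Set V) →
      (∀ u ∈ (BblockF t : Set V) \ {((0, 0, 0) : V)}, Ψ u = ψ u) →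
      (∀ u ∈ BblockF t, nonnegV (Ψ u - u)) →
      (∀ u ∈ BblockF t, ∀ h' : ℤ, h' < (n : ℤ) →
        Ψ u - u ≠ qvec m h' ∧ Ψ u - u ≠ qvec m h' + e1v) →
      ((BblockF t).filter (fun u => Ψ u - u = qvec m n)).card ≤ t + 1 →
      ∃ l0 : ℤ, 0 ≤ l0 ∧ l0 ≤ (t : ℤ) + 1 ∧ ∀ u ∈ BblockF t, Ψ u = phiHatB m n l0 u := by
  classical
  have hset : (((BblockF t).erase ((0,0,0) : V)) : Set V)
      = ((BblockF t : Set V) \ {((0, 0, 0) : V)}) := Finset.coe_erase _ _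
  have hmem : ∀ u ∈ (BblockF t).erase ((0,0,0) : V),
      u ∈ (BblockF t : Set V) \ {((0, 0, 0) : V)} := by
    intro u hu
    rw [← hset]
    exact Finset.mem_coe.2 hu
  constructor
  · refine SBR.part1 m n t ψ (fun u hu => ?_) (fun u hu => hdiv u (hmem u hu))
      (fun u hu => hno u (hmem u hu)) (by rw [hset]; exact hinj)
    exact Finset.mem_coe.1 (hmaps (hmem u hu))
  · intro Ψ hbij _ hdivΨ hnoΨ hcnt
    exact SBR.part2 m n t Ψ hbij hdivΨ hnoΨ hcnt
end
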